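/- arXiv:1507.01048 — 5 statements merged into one kernel-verified Lean document; each statement's English description precedes it below -/
import Mathlib

section
/- For a natural number a and integer k ≥ 1, the alternating sum ∑_{j=0}^{a} (-1)^{a-j} · C(j+k-1, k-1) · C(a-j+k-1, k-1) equals C(a/2+k-1, k-1) if a is even, and 0 if a is odd. -/
open PowerSeries Finset

lemma expand_pow (k : ℕ) (u : ℝ⟦X⟧) :
    ((1 : ℝ⟦X⟧) - u) ^ k
      = ∑ i ∈ range (k + 1), PowerSeries.C ((-1 : ℝ) ^ i * k.choose i) * u ^ i := by
  rw [sub_eq_add_neg, add_comm, add_pow]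
  refine Finset.sum_congr rfl fun i hi => ?_
  rw [neg_pow, one_pow, mul_one, map_mul, map_pow, map_neg, map_one, map_natCast]
  ring

lemma keyB (k : ℕ) (hk : 1 ≤ k) (m : ℕ) :
    ∑ i ∈ range (k + 1), (-1 : ℝ) ^ i * k.choose i *
      (if i ≤ m then ((k - 1 + (m - i)).choose (k - 1) : ℝ) else 0)
    = if m = 0 then 1 else 0 := by
  have hf : ((1 : ℝ⟦X⟧) - X) ^ k * (invOneSubPow ℝ k).val = 1 := by
    rw [← invOneSubPow_inv_eq_one_sub_pow]
    exact (invOneSubPow ℝ k).inv_val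
  have h2 := congrArg (PowerSeries.coeff m) hf
  rw [expand_pow, Finset.sum_mul, map_sum, coeff_one] at h2
  rw [← h2]
  refine Finset.sum_congr rfl fun i hi => ?_
  rw [mul_assoc (PowerSeries.C ((-1 : ℝ) ^ i * k.choose i)), coeff_C_mul,
    coeff_X_pow_mul' (invOneSubPow ℝ k).val i m,
    invOneSubPow_val_eq_mk_sub_one_add_choose_of_pos ℝ k hk]
  by_cases h : i ≤ m <;> simp [h, coeff_mk]

lemma keyH (k : ℕ) (hk : 1 ≤ k) :
    ((1 : ℝ⟦X⟧) - X ^ 2) ^ k *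
      PowerSeries.mk (fun n => if Even n then ((k - 1 + n / 2).choose (k - 1) : ℝ) else 0) = 1 := by
  ext n
  rw [expand_pow, Finset.sum_mul, map_sum, coeff_one]
  have hterm : ∀ i ∈ range (k + 1),
      (PowerSeries.coeff n) (PowerSeries.C ((-1 : ℝ) ^ i * k.choose i) * ((X : ℝ⟦X⟧) ^ 2) ^ i *
        PowerSeries.mk (fun n => if Even n then ((k - 1 + n / 2).choose (k - 1) : ℝ) else 0))
      = (-1 : ℝ) ^ i * k.choose i *
        (if 2 * i ≤ n then (if Even (n - 2 * i) then ((k - 1 + (n - 2 * i) / 2).choose (k - 1) : ℝ) else 0) else 0) := by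
    intro i _
    rw [← pow_mul, mul_assoc, coeff_C_mul, coeff_X_pow_mul' _ (2 * i) n]
    by_cases h : 2 * i ≤ n <;> simp [h, coeff_mk]
  rw [Finset.sum_congr rfl hterm]
  rcases Nat.even_or_odd n with he | ho
  · obtain ⟨m, hm⟩ := he
    have hn : n = 2 * m := by omega
    subst hn
    have hc : ∀ i ∈ range (k + 1),
        (-1 : ℝ) ^ i * k.choose i *
          (if 2 * i ≤ 2 * m then (if Even (2 * m - 2 * i) then ((k - 1 + (2 * m - 2 * i) / 2).choose (k - 1) : ℝ) else 0) else 0)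
        = (-1 : ℝ) ^ i * k.choose i *
          (if i ≤ m then ((k - 1 + (m - i)).choose (k - 1) : ℝ) else 0) := by
      intro i _
      congr 1
      by_cases h : i ≤ m
      · have h2 : 2 * i ≤ 2 * m := by omega
        have h3 : Even (2 * m - 2 * i) := ⟨m - i, by omega⟩
        have h4 : (2 * m - 2 * i) / 2 = m - i := by omega
        simp [h, h2, h3, h4]
      · have h2 : ¬ 2 * i ≤ 2 * m := by omega
        simp [h, h2]
    rw [Finset.sum_congr rfl hc, keyB k hk m]
    by_cases hm0 : m = 0 <;> simp [hm0]
  · have hn0 : n ≠ 0 := by rintro rfl; exact Nat.not_odd_zero ho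
    simp only [hn0, if_false]
    refine Finset.sum_eq_zero fun i _ => ?_
    by_cases h : 2 * i ≤ n
    · have hodd : ¬ Even (n - 2 * i) := by
        rcases ho with ⟨t, ht⟩
        rintro ⟨s, hs⟩; omega
      simp [h, hodd]
    · simp [h]

theorem stmt0 (a k : ℕ) (hk : 1 ≤ k) :
    ∑ j ∈ Finset.range (a + 1),
      (-1 : ℝ) ^ (a - j) * ((j + k - 1).choose (k - 1)) * ((a - j + k - 1).choose (k - 1))
    = if Even a then ((a / 2 + k - 1).choose (k - 1) : ℝ) else 0 := by
  set f : ℝ⟦X⟧ := (invOneSubPow ℝ k).val with hfdef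
  set g : ℝ⟦X⟧ := PowerSeries.rescale (-1) f with hgdef
  set h : ℝ⟦X⟧ := PowerSeries.mk
    (fun n => if Even n then ((k - 1 + n / 2).choose (k - 1) : ℝ) else 0) with hhdef
  have hcf : ∀ n, PowerSeries.coeff n f = ((k - 1 + n).choose (k - 1) : ℝ) := by
    intro n
    rw [hfdef, invOneSubPow_val_eq_mk_sub_one_add_choose_of_pos ℝ k hk, coeff_mk]
  have hf : ((1 : ℝ⟦X⟧) - X) ^ k * f = 1 := by
    rw [hfdef, ← invOneSubPow_inv_eq_one_sub_pow]
    exact (invOneSubPow ℝ k).inv_val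
  have h1 : PowerSeries.rescale (-1 : ℝ) (1 - X) = 1 + X := by
    rw [map_sub, map_one, rescale_X, map_neg, map_one, neg_one_mul, sub_neg_eq_add]
  have hg : ((1 : ℝ⟦X⟧) + X) ^ k * g = 1 := by
    rw [hgdef, ← h1, ← map_pow, ← map_mul, hf, map_one]
  have hfg : ((1 : ℝ⟦X⟧) - X ^ 2) ^ k * (f * g) = 1 := by
    have hx : ((1 : ℝ⟦X⟧) - X ^ 2) = (1 - X) * (1 + X) := by ring
    rw [hx, mul_pow]
    calc (1 - X) ^ k * (1 + X) ^ k * (f * g)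
        = ((1 - X) ^ k * f) * ((1 + X) ^ k * g) := by ring
      _ = 1 := by rw [hf, hg, one_mul]
  have hfgh : f * g = h := by
    have hne : ((1 : ℝ⟦X⟧) - X ^ 2) ^ k ≠ 0 := by
      intro h0
      have := congrArg (PowerSeries.constantCoeff) h0
      simp at this
    have hkH := keyH k hk
    rw [← hhdef] at hkH
    exact mul_left_cancel₀ hne (hfg.trans hkH.symm)
  calc ∑ j ∈ Finset.range (a + 1),
      (-1 : ℝ) ^ (a - j) * ((j + k - 1).choose (k - 1)) * ((a - j + k - 1).choose (k - 1))
      = ∑ j ∈ Finset.range (a + 1),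
        PowerSeries.coeff j f * PowerSeries.coeff (a - j) g := by
        refine Finset.sum_congr rfl fun j hj => ?_
        rw [hgdef, coeff_rescale, hcf, hcf]
        have e1 : j + k - 1 = k - 1 + j := by omega
        have e2 : a - j + k - 1 = k - 1 + (a - j) := by omega
        rw [e1, e2]; ring
    _ = PowerSeries.coeff a (f * g) := by
        rw [coeff_mul, Finset.Nat.sum_antidiagonal_eq_sum_range_succ
          (f := fun i j => PowerSeries.coeff i f * PowerSeries.coeff j g)]
    _ = if Even a then ((a / 2 + k - 1).choose (k - 1) : ℝ) else 0 := by
        rw [hfgh, hhdef, coeff_mk]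
        by_cases hea : Even a
        · have e3 : k - 1 + a / 2 = a / 2 + k - 1 := by omega
          simp [hea, e3]
        · simp [hea]
end

section
/- Let a be an even natural number, λ > 0, and k ≥ 1 an integer. Let X and Y be independent Gamma-distributed random variables, both with shape k and rate λ. Then E[|X - Y|^a] = (a!/λ^a) · Γ(a/2 + k) / (Γ(k) · Γ(a/2 + 1)). -/
open Finset

/-- `cc K j` is the coefficient of `X^j` in `(1-X)^{-(K+1)}`. -/
def cc (K j : ℕ) : ℤ := ((K + j).choose j : ℤ)

def Sa (K n : ℕ) : ℤ := ∑ j ∈ range (n+1), (-1)^j * cc K j * cc K (n - j)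

def Ua (K n : ℕ) : ℤ := ∑ j ∈ range (n+1), (-1)^j * cc K j * cc (K+1) (n - j)

lemma cc_zero_right (K : ℕ) : cc K 0 = 1 := by simp [cc]

lemma cc_zero_left (j : ℕ) : cc 0 j = 1 := by simp [cc]

lemma cc_pascal (K i : ℕ) : cc (K+1) (i+1) = cc K (i+1) + cc (K+1) i := by
  simp only [cc]
  push_cast
  rw [show K + 1 + (i + 1) = (K + (i+1)) + 1 by ring, Nat.choose_succ_succ (K + (i+1)) i]
  push_cast [show K + (i+1) = K + 1 + i by ring]
  ring

lemma Sa_zero (K : ℕ) : Sa K 0 = 1 := by simp [Sa, cc]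

lemma Sa_one (K : ℕ) : Sa K 1 = 0 := by
  simp [Sa, sum_range_succ, cc]

lemma Sa_base (n : ℕ) : Sa 0 n = if Even n then 1 else 0 := by
  simp only [Sa, cc_zero_left, mul_one]
  rw [neg_one_geom_sum (R := ℤ) (n := n+1)]
  rcases Nat.even_or_odd n with h | h
  · rw [if_neg (by simp [Nat.even_add_one, h]), if_pos h]
  · have h1 : Even (n+1) := Nat.even_add_one.mpr (by simpa using h)
    rw [if_pos h1, if_neg (by simpa using h)]

lemma Sa_eq_Ua (K n : ℕ) : Sa (K+1) (n+1) = Ua K (n+1) - Sa (K+1) n := by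
  have split : ∀ j ∈ range (n+2), (-1:ℤ)^j * cc (K+1) j * cc (K+1) (n+1-j)
      = (-1)^j * cc K j * cc (K+1) (n+1-j)
        + (if j = 0 then 0 else (-1)^j * cc (K+1) (j-1) * cc (K+1) (n+1-j)) := by
    intro j _
    cases j with
    | zero => simp [cc]
    | succ i => simp [cc_pascal]; ring
  rw [Sa, sum_congr rfl split, sum_add_distrib]
  have h1 : ∑ j ∈ range (n+2), (-1:ℤ)^j * cc K j * cc (K+1) (n+1-j) = Ua K (n+1) := rfl
  have h2 : ∑ j ∈ range (n+2),
      (if j = 0 then (0:ℤ) else (-1)^j * cc (K+1) (j-1) * cc (K+1) (n+1-j)) = - Sa (K+1) n := by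
    rw [sum_range_succ' _ (n+1)]
    simp only [Nat.succ_ne_zero, reduceIte, add_zero, Nat.add_sub_cancel]
    rw [Sa, ← sum_neg_distrib]
    apply sum_congr rfl
    intro i hi
    have : n + 1 - (i+1) = n - i := by omega
    rw [this]
    ring
  rw [h1, h2]
  ring

lemma Ua_succ (K n : ℕ) : Ua K (n+1) = Sa K (n+1) + Ua K n := by
  have split : ∀ j ∈ range (n+2), (-1:ℤ)^j * cc K j * cc (K+1) (n+1-j)
      = (-1)^j * cc K j * cc K (n+1-j)
        + (if j = n+1 then 0 else (-1)^j * cc K j * cc (K+1) (n-j)) := by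
    intro j hj
    rw [mem_range] at hj
    by_cases h : j = n+1
    · subst h
      simp [cc]
    · have hle : j ≤ n := by omega
      have : n + 1 - j = (n - j) + 1 := by omega
      rw [if_neg h, this, cc_pascal]
      ring
  rw [Ua, sum_congr rfl split, sum_add_distrib]
  have h1 : ∑ j ∈ range (n+2), (-1:ℤ)^j * cc K j * cc K (n+1-j) = Sa K (n+1) := rfl
  have h2 : ∑ j ∈ range (n+2),
      (if j = n+1 then (0:ℤ) else (-1)^j * cc K j * cc (K+1) (n-j)) = Ua K n := by
    rw [sum_range_succ]
    simp only [reduceIte, add_zero]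
    apply sum_congr rfl
    intro i hi
    rw [mem_range] at hi
    rw [if_neg (by omega)]
  rw [h1, h2]

lemma Sa_rec (K n : ℕ) : Sa (K+1) (n+2) = Sa K (n+2) + Sa (K+1) n := by
  have h1 := Sa_eq_Ua K (n+1)
  have h2 := Ua_succ K (n+1)
  have h3 := Sa_eq_Ua K n
  linarith

lemma Sa_formula : ∀ K n, Sa K n = if Even n then ((K + n/2).choose (n/2) : ℤ) else 0 := by
  intro K
  induction K with
  | zero => intro n; rw [Sa_base]; split <;> simp
  | succ K ih =>
    intro n
    induction n using Nat.twoStepInduction with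
    | zero => simp [Sa_zero]
    | one => simp [Sa_one, Nat.not_even_one]
    | more n ihn _ =>
      rw [Sa_rec, ih (n+2), ihn]
      by_cases hn : Even n
      · obtain ⟨t, ht⟩ := hn
        have hnt : n = 2 * t := by omega
        subst hnt
        have he : Even (2*t+2) := ⟨t+1, by ring⟩
        rw [if_pos he, if_pos (by exact ⟨t, by omega⟩), if_pos (by exact ⟨t+1, by omega⟩)]
        have e1 : (2*t+2)/2 = t+1 := by omega
        have e2 : (2*t)/2 = t := by omega
        rw [e1, e2]
        have hp : (K + 1 + (t+1)).choose (t+1) = (K + (t+1)).choose (t+1) + (K + 1 + t).choose t := by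
          rw [show K + 1 + (t+1) = (K + (t+1)) + 1 by ring, Nat.choose_succ_succ (K + (t+1)) t,
            add_comm ((K + (t+1)).choose t), show K + (t+1) = K + 1 + t by ring]
        rw [hp]
        push_cast
        ring
      · have h2 : ¬ Even (n+2) := by simpa [Nat.even_add] using hn
        rw [if_neg h2, if_neg h2, if_neg hn, add_zero]


open MeasureTheory ProbabilityTheory Real Set
open scoped ENNReal NNReal

section moments
variable (k j : ℕ) (lam : ℝ)

noncomputable def momF (x : ℝ) : ℝ :=
  lam ^ k / Gamma k * (x ^ ((k : ℝ) + j - 1) * Real.exp (-(lam * x)))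

lemma gammaMeasure_eq :
    gammaMeasure (k : ℝ) lam
      = (volume : Measure ℝ).withDensity (fun x => ((gammaPDFReal k lam x).toNNReal : ℝ≥0∞)) := rfl

lemma smul_ae_eq (hk : 1 ≤ k) (hlam : 0 < lam) :
    (fun x => (gammaPDFReal k lam x).toNNReal • (x ^ j : ℝ))
      =ᵐ[volume] (Ioi (0:ℝ)).indicator (momF k j lam) := by
  have hne : {x : ℝ | ¬ ((gammaPDFReal k lam x).toNNReal • (x ^ j : ℝ)
      = (Ioi (0:ℝ)).indicator (momF k j lam) x)} ⊆ {0} := by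
    intro x hx
    simp only [Set.mem_setOf_eq] at hx
    by_contra hx0
    apply hx
    have hk' : (0:ℝ) < k := by exact_mod_cast hk
    rcases lt_or_gt_of_ne (show x ≠ 0 by simpa using hx0) with h | h
    · rw [Set.indicator_of_notMem (by simpa using h.le)]
      have : gammaPDFReal k lam x = 0 := by
        simp [gammaPDFReal, not_le.mpr h]
      simp [this]
    · rw [Set.indicator_of_mem (by simpa using h)]
      have hnn : 0 ≤ gammaPDFReal k lam x := gammaPDFReal_nonneg hk' hlam x
      rw [NNReal.smul_def, smul_eq_mul, Real.coe_toNNReal _ hnn]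
      rw [gammaPDFReal, if_pos h.le, momF]
      rw [show lam ^ (k:ℝ) = lam ^ k from rpow_natCast lam k]
      rw [show (x:ℝ) ^ j = x ^ (j:ℝ) from (rpow_natCast x j).symm]
      have hxx : x ^ ((k:ℝ) - 1) * x ^ (j:ℝ) = x ^ ((k:ℝ) + j - 1) := by
        rw [← Real.rpow_add h]; ring_nf
      linear_combination (lam ^ k / Gamma (k:ℝ) * Real.exp (-(lam*x))) * hxx
  have : ∀ᵐ x ∂(volume : Measure ℝ), ((gammaPDFReal k lam x).toNNReal • (x ^ j : ℝ)
      = (Ioi (0:ℝ)).indicator (momF k j lam) x) := by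
    rw [ae_iff]
    exact measure_mono_null hne (by simp)
  exact this

lemma momF_integrableOn (hk : 1 ≤ k) (hlam : 0 < lam) :
    IntegrableOn (momF k j lam) (Ioi (0:ℝ)) := by
  apply Integrable.const_mul
  have h := integrableOn_rpow_mul_exp_neg_mul_rpow
    (p := 1) (s := (k : ℝ) + j - 1) (b := lam)
    (by have : (1:ℝ) ≤ k := by exact_mod_cast hk
        have : (0:ℝ) ≤ j := by positivity
        linarith) one_pos hlam
  apply h.congr_fun ?_ measurableSet_Ioi
  intro x hx
  simp only [Real.rpow_one, neg_mul]

lemma gamma_pow_integrable (hk : 1 ≤ k) (hlam : 0 < lam) :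
    Integrable (fun x => (x : ℝ) ^ j) (gammaMeasure k lam) := by
  rw [gammaMeasure_eq,
    integrable_withDensity_iff_integrable_smul
      ((measurable_gammaPDFReal (k:ℝ) lam).real_toNNReal)]
  apply Integrable.congr _ (smul_ae_eq k j lam hk hlam).symm
  exact (momF_integrableOn k j lam hk hlam).integrable_indicator measurableSet_Ioi

lemma gamma_moment (hk : 1 ≤ k) (hlam : 0 < lam) :
    ∫ x, (x : ℝ) ^ j ∂(gammaMeasure k lam)
      = Gamma ((k : ℝ) + j) / (Gamma k * lam ^ j) := by
  have hk' : (0:ℝ) < k := by exact_mod_cast hk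
  rw [gammaMeasure_eq,
    integral_withDensity_eq_integral_smul
      ((measurable_gammaPDFReal (k:ℝ) lam).real_toNNReal)]
  rw [integral_congr_ae (smul_ae_eq k j lam hk hlam)]
  rw [integral_indicator measurableSet_Ioi]
  unfold momF
  rw [integral_const_mul, integral_rpow_mul_exp_neg_mul_Ioi (by positivity) hlam]
  rw [show ((k:ℝ) + j) = ((k + j : ℕ) : ℝ) by push_cast; ring,
    Real.rpow_natCast (1/lam) (k+j)]
  have hG : Gamma (k:ℝ) ≠ 0 := ne_of_gt (Gamma_pos_of_pos hk')
  field_simp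
  have h1 : lam * lam⁻¹ = 1 := mul_inv_cancel₀ hlam.ne'
  calc _ = (lam * lam⁻¹) ^ k * (lam * lam⁻¹) ^ j := by ring
    _ = 1 := by rw [h1]; simp
end moments


open MeasureTheory ProbabilityTheory Real Set Finset
open scoped ENNReal NNReal

section key
lemma term_eq (a i K : ℕ) (h : i ≤ a) :
    a.choose i * (K+i).factorial * (K+(a-i)).factorial
      = a.factorial * (K.factorial * K.factorial)
        * ((K+i).choose i * (K+(a-i)).choose (a-i)) := by
  have h1 := Nat.choose_mul_factorial_mul_factorial (Nat.le_add_left i K)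
  have h2 := Nat.choose_mul_factorial_mul_factorial (Nat.le_add_left (a-i) K)
  have h3 := Nat.choose_mul_factorial_mul_factorial h
  rw [Nat.add_sub_cancel] at h1 h2
  rw [← h1, ← h2, ← h3]
  ring

lemma key_real (m K : ℕ) :
    ∑ i ∈ range (2*m+1),
        (-1:ℝ)^i * ((2*m).choose i : ℝ) * ((K+i).factorial : ℝ) * ((K+(2*m-i)).factorial : ℝ)
      = ((2*m).factorial : ℝ) * ((K.factorial : ℝ) * (K.factorial : ℝ)) * (((K+m).choose m : ℝ)) := by
  have hS := Sa_formula K (2*m)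
  rw [if_pos (even_two_mul m)] at hS
  have e2 : (2*m)/2 = m := by omega
  rw [e2] at hS
  have hS' : (∑ j ∈ range (2*m+1),
      (-1:ℝ)^j * (((K+j).choose j : ℕ) : ℝ) * (((K+(2*m-j)).choose (2*m-j) : ℕ) : ℝ))
      = (((K+m).choose m : ℕ) : ℝ) := by
    have := congrArg (fun z : ℤ => (z : ℝ)) hS
    push_cast [Sa, cc] at this
    push_cast
    convert this using 2
  calc ∑ i ∈ range (2*m+1),
        (-1:ℝ)^i * ((2*m).choose i : ℝ) * ((K+i).factorial : ℝ) * ((K+(2*m-i)).factorial : ℝ)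
      = ∑ i ∈ range (2*m+1), ((2*m).factorial : ℝ) * ((K.factorial : ℝ) * (K.factorial : ℝ))
          * ((-1:ℝ)^i * (((K+i).choose i : ℕ) : ℝ) * (((K+(2*m-i)).choose (2*m-i) : ℕ) : ℝ)) := by
        apply Finset.sum_congr rfl
        intro i hi
        rw [Finset.mem_range] at hi
        have hterm := term_eq (2*m) i K (by omega)
        have : ((2*m).choose i : ℝ) * ((K+i).factorial : ℝ) * ((K+(2*m-i)).factorial : ℝ)
            = ((2*m).factorial : ℝ) * ((K.factorial : ℝ) * (K.factorial : ℝ))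
              * (((((K+i).choose i : ℕ)) : ℝ) * ((((K+(2*m-i)).choose (2*m-i) : ℕ)) : ℝ)) := by
          exact_mod_cast congrArg (fun n : ℕ => (n : ℝ)) hterm
        calc (-1:ℝ)^i * ((2*m).choose i : ℝ) * ((K+i).factorial : ℝ) * ((K+(2*m-i)).factorial : ℝ)
            = (-1:ℝ)^i * (((2*m).choose i : ℝ) * ((K+i).factorial : ℝ) * ((K+(2*m-i)).factorial : ℝ)) := by ring
          _ = _ := by rw [this]; ring
    _ = _ := by rw [← Finset.mul_sum, hS']
end key

theorem stmt5 (a k : ℕ) (ha : Even a) (hk : 1 ≤ k) (lam : ℝ) (hlam : 0 < lam) :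
    ∫ p : ℝ × ℝ, |p.1 - p.2| ^ a
        ∂((gammaMeasure k lam).prod (gammaMeasure k lam))
    = (Nat.factorial a : ℝ) / lam ^ a *
        (Real.Gamma ((a : ℝ) / 2 + k) / (Real.Gamma k * Real.Gamma ((a : ℝ) / 2 + 1))) := by
  obtain ⟨m, hm⟩ := ha
  have ha2 : a = 2 * m := by omega
  subst ha2
  obtain ⟨K, rfl⟩ : ∃ K, k = K + 1 := ⟨k-1, by omega⟩
  have hk0 : (0:ℝ) < ((K+1:ℕ):ℝ) := by positivity
  haveI : IsProbabilityMeasure (gammaMeasure ((K+1:ℕ):ℝ) lam) :=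
    isProbabilityMeasure_gammaMeasure hk0 hlam
  set μ := gammaMeasure ((K+1:ℕ):ℝ) lam with hμ
  have hmom : ∀ j : ℕ, ∫ x, x ^ j ∂μ
      = ((K+j).factorial : ℝ) / ((K.factorial : ℝ) * lam ^ j) := by
    intro j
    rw [hμ, gamma_moment (K+1) j lam (Nat.le_add_left 1 K) hlam]
    rw [show (((K+1:ℕ)):ℝ) + (j:ℝ) = ((K+j:ℕ):ℝ) + 1 by push_cast; ring,
      Real.Gamma_nat_eq_factorial,
      show (((K+1:ℕ)):ℝ) = ((K:ℕ):ℝ) + 1 by push_cast; ring,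
      Real.Gamma_nat_eq_factorial]
  have hint : ∀ j : ℕ, Integrable (fun x => x ^ j) μ := fun j =>
    gamma_pow_integrable (K+1) j lam (Nat.le_add_left 1 K) hlam
  have hfun : ∀ p : ℝ × ℝ, |p.1 - p.2| ^ (2*m)
      = ∑ i ∈ range (2*m+1),
          (((-1:ℝ)^i * ((2*m).choose i : ℝ)) * p.1 ^ i) * p.2 ^ (2*m-i) := by
    intro p
    rw [Even.pow_abs (even_two_mul m), sub_pow]
    apply Finset.sum_congr rfl
    intro i hi
    have hsign : (-1:ℝ)^(i+2*m) = (-1)^i := by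
      rw [pow_add, Even.neg_one_pow (even_two_mul m), mul_one]
    rw [hsign]
    ring
  simp_rw [hfun]
  rw [integral_finset_sum _ (fun i hi =>
    ((hint i).const_mul ((-1:ℝ)^i * ((2*m).choose i : ℝ))).mul_prod (hint (2*m-i)))]
  have hterm : ∀ i ∈ range (2*m+1),
      ∫ p : ℝ × ℝ, (((-1:ℝ)^i * ((2*m).choose i : ℝ)) * p.1 ^ i) * p.2 ^ (2*m-i) ∂(μ.prod μ)
      = (((K.factorial : ℝ) * (K.factorial : ℝ)) * lam ^ (2*m))⁻¹
          * ((-1:ℝ)^i * ((2*m).choose i : ℝ) * ((K+i).factorial : ℝ)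
              * ((K+(2*m-i)).factorial : ℝ)) := by
    intro i hi
    rw [Finset.mem_range] at hi
    rw [integral_prod_mul (f := fun x : ℝ => ((-1:ℝ)^i * ((2*m).choose i : ℝ)) * x ^ i)
      (g := fun y : ℝ => y ^ (2*m-i)), integral_const_mul, hmom, hmom]
    have hpow : lam ^ i * lam ^ (2*m-i) = lam ^ (2*m) := by
      rw [← pow_add]
      congr 1
      omega
    rw [← hpow]
    simp only [div_eq_mul_inv, mul_inv]
    ring
  rw [Finset.sum_congr rfl hterm, ← Finset.mul_sum, key_real m K]
  have hg1 : Real.Gamma (((2*m:ℕ):ℝ)/2 + ((K+1:ℕ):ℝ)) = ((m+K).factorial : ℝ) := by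
    rw [show ((2*m:ℕ):ℝ)/2 + ((K+1:ℕ):ℝ) = ((m+K:ℕ):ℝ) + 1 by push_cast; ring,
      Real.Gamma_nat_eq_factorial]
  have hg2 : Real.Gamma (((K+1:ℕ)):ℝ) = (K.factorial : ℝ) := by
    rw [show (((K+1:ℕ)):ℝ) = ((K:ℕ):ℝ) + 1 by push_cast; ring, Real.Gamma_nat_eq_factorial]
  have hg3 : Real.Gamma (((2*m:ℕ):ℝ)/2 + 1) = (m.factorial : ℝ) := by
    rw [show ((2*m:ℕ):ℝ)/2 + 1 = ((m:ℕ):ℝ) + 1 by push_cast; ring, Real.Gamma_nat_eq_factorial]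
  rw [hg1, hg2, hg3]
  have hch : (((K+m).choose m : ℕ) : ℝ) * ((m.factorial : ℝ) * (K.factorial : ℝ))
      = ((m+K).factorial : ℝ) := by
    have := Nat.choose_mul_factorial_mul_factorial (Nat.le_add_left m K)
    rw [Nat.add_sub_cancel] at this
    exact_mod_cast by
      calc ((K+m).choose m : ℕ) * (m.factorial * K.factorial)
          = (K+m).choose m * m.factorial * K.factorial := by ring
        _ = (K+m).factorial := this
        _ = (m+K).factorial := by rw [Nat.add_comm]
  have hK : (K.factorial : ℝ) ≠ 0 := Nat.cast_ne_zero.mpr K.factorial_ne_zero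
  have hm' : (m.factorial : ℝ) ≠ 0 := Nat.cast_ne_zero.mpr m.factorial_ne_zero
  have hl : lam ≠ 0 := ne_of_gt hlam
  rw [← hch]
  field_simp
end

section
/- For natural numbers a and b with 0 ≤ b ≤ (a-1)/2, ∑_{j=0}^{b} C(a, j) · C(a-1-b-j, b-j) equals (2^b / b!) · ∏_{j=1}^{b} (a - (2j-1)) when b ≥ 1, and equals 1 when b = 0. -/
open Finset

noncomputable def ff (b c : ℕ) : ℝ :=
  ∑ i ∈ range (b+1), ((2*b+1+c).choose (b-i) : ℝ) * ((c+i).choose i : ℝ)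

-- Pascal shift on the second factor
lemma hH (m s : ℕ) (g : ℕ → ℝ) :
    ∑ i ∈ range (m+1), g i * ((s+1+i).choose i : ℝ)
    = ∑ i ∈ range (m+1), g i * ((s+i).choose i : ℝ)
      + ∑ i ∈ range m, g (i+1) * ((s+1+i).choose i : ℝ) := by
  rw [Finset.sum_range_succ' (fun i => g i * ((s+1+i).choose i : ℝ)) m,
      Finset.sum_range_succ' (fun i => g i * ((s+i).choose i : ℝ)) m]
  have key : ∀ i ∈ range m,
      g (i+1) * (((s+1+(i+1)).choose (i+1) : ℕ) : ℝ)
      = g (i+1) * ((s+1+i).choose i : ℝ) + g (i+1) * ((s+(i+1)).choose (i+1) : ℝ) := by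
    intro i _
    have h1 : s+1+(i+1) = (s+1+i)+1 := by omega
    have h2 : s+(i+1) = s+1+i := by omega
    rw [h1, h2, Nat.choose_succ_succ]
    push_cast
    ring
  rw [Finset.sum_congr rfl key, Finset.sum_add_distrib]
  simp
  ring

-- Pascal shift on the first factor
lemma hH2 (m M : ℕ) (q : ℕ → ℝ) :
    ∑ i ∈ range (m+1), (((M+1).choose (m-i) : ℕ) : ℝ) * q i
    = ∑ i ∈ range (m+1), (M.choose (m-i) : ℝ) * q i
      + ∑ i ∈ range m, (M.choose (m-1-i) : ℝ) * q i := by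
  rw [Finset.sum_range_succ (fun i => (((M+1).choose (m-i):ℕ):ℝ) * q i) m,
      Finset.sum_range_succ (fun i => ((M.choose (m-i):ℕ):ℝ) * q i) m]
  have key : ∀ i ∈ range m,
      (((M+1).choose (m-i) : ℕ) : ℝ) * q i
      = (M.choose (m-i) : ℝ) * q i + (M.choose (m-1-i) : ℝ) * q i := by
    intro i hi
    have hi' := mem_range.mp hi
    have h1 : m - i = (m-1-i)+1 := by omega
    rw [h1, Nat.choose_succ_succ]
    push_cast
    ring
  rw [Finset.sum_congr rfl key, Finset.sum_add_distrib]
  simp [Nat.sub_self]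
  ring

lemma recur (b c : ℕ) : ff (b+1) (c+2) = ff (b+1) c + 4 * ff b (c+2) := by
  have e1 : 2*(b+1)+1+(c+2) = (2*b+3+c)+1+1 := by omega
  have e2 : 2*(b+1)+1+c = 2*b+3+c := by omega
  have e3 : 2*b+1+(c+2) = 2*b+3+c := by omega
  set N := 2*b+3+c with hN
  simp only [ff, e1, e2, e3]
  -- abbreviations
  have h1 := hH2 (b+1) (N+1) (fun i => (((c+2)+i).choose i : ℝ))
  have h2 := hH2 (b+1) N (fun i => (((c+2)+i).choose i : ℝ))
  have h3 := hH2 b N (fun i => (((c+2)+i).choose i : ℝ))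
  have h4 := hH (b+1) (c+1) (fun i => (N.choose (b+1-i) : ℝ))
  have h5 := hH (b+1) c (fun i => (N.choose (b+1-i) : ℝ))
  have h6 := hH b (c+1) (fun i => (N.choose (b-i) : ℝ))
  have r1 : ∀ i:ℕ, b+1-(i+1) = b-i := fun i => by omega
  have r2 : ∀ i:ℕ, b - 0 - i = b - i := fun i => by omega
  have r3 : c+1+1 = c+2 := by omega
  simp only [Nat.add_sub_cancel, r1, r2, r3] at h1 h2 h3 h4 h5 h6 ⊢
  have r4 : ∑ x ∈ range b, (N.choose (b - (x + 1)) : ℝ) * ((c + 2 + x).choose x : ℝ)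
      = ∑ x ∈ range b, (N.choose (b - 1 - x) : ℝ) * ((c + 2 + x).choose x : ℝ) := by
    apply Finset.sum_congr rfl
    intro x _
    have : b - (x+1) = b-1-x := by omega
    rw [this]
  rw [r4] at h6
  linarith [h1, h2, h3, h4, h5, h6]

lemma base0 (b : ℕ) : ff b 0 = 4^b := by
  have h : ∀ i ∈ range (b+1),
      ((2*b+1+0).choose (b-i) : ℝ) * ((0+i).choose i : ℝ) = ((2*b+1).choose (b-i) : ℝ) := by
    intro i _; simp
  rw [ff, Finset.sum_congr rfl h, ← Nat.cast_sum]
  have hrefl : ∑ i ∈ range (b+1), (2*b+1).choose (b-i) = ∑ i ∈ range (b+1), (2*b+1).choose i := by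
    have := Finset.sum_range_reflect (fun i => (2*b+1).choose i) (b+1)
    simpa using this
  rw [hrefl, Nat.sum_range_choose_halfway b]
  push_cast; ring

lemma base1_nat (b : ℕ) :
    ∑ i ∈ range (b+1), (2*b+2).choose (b-i) * (i+1) = (b+1) * (2*b+1).choose b := by
  set U := ∑ i ∈ range b, (2*b+1).choose (b-1-i) with hU
  set T := ∑ i ∈ range (b+1), (2*b+2).choose (b-i) * (i+1) with hT
  -- W = sum (b-i) * choose
  have hW : ∑ i ∈ range (b+1), (2*b+2).choose (b-i) * (b-i) = (2*b+2) * U := by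
    rw [Finset.sum_range_succ]
    simp only [Nat.sub_self, Nat.mul_zero, Nat.add_zero]
    have key : ∀ i ∈ range b, (2*b+2).choose (b-i) * (b-i) = (2*b+2) * (2*b+1).choose (b-1-i) := by
      intro i hi
      have hi' := mem_range.mp hi
      have h1 : b - i = (b-1-i)+1 := by omega
      rw [h1]
      have h3 := Nat.add_one_mul_choose_eq (2*b+1) (b-1-i)
      have h2 : 2*b+1+1 = 2*b+2 := by omega
      rw [h2] at h3
      exact h3.symm
    rw [Finset.sum_congr rfl key, ← Finset.mul_sum]
  have hV2 : ∑ i ∈ range (b+1), (2*b+2).choose (b-i)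
      = U + (∑ i ∈ range (b+1), (2*b+1).choose (b-i)) := by
    rw [Finset.sum_range_succ, Finset.sum_range_succ (fun i => (2*b+1).choose (b-i))]
    simp only [Nat.sub_self, Nat.choose_zero_right]
    have key : ∀ i ∈ range b,
        (2*b+2).choose (b-i) = (2*b+1).choose (b-1-i) + (2*b+1).choose (b-i) := by
      intro i hi
      have hi' := mem_range.mp hi
      have h1 : b - i = (b-1-i)+1 := by omega
      have h2 : 2*b+2 = (2*b+1)+1 := by omega
      rw [h1, h2, Nat.choose_succ_succ]
    rw [Finset.sum_congr rfl key, Finset.sum_add_distrib]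
    omega
  have hV : ∑ i ∈ range (b+1), (2*b+1).choose (b-i) = U + (2*b+1).choose b := by
    rw [Finset.sum_range_succ' (fun i => (2*b+1).choose (b-i))]
    simp only [Nat.sub_zero]
    congr 1
    apply Finset.sum_congr rfl
    intro i _
    congr 1
    omega
  have hsplit : T + ∑ i ∈ range (b+1), (2*b+2).choose (b-i) * (b-i)
      = (b+1) * ∑ i ∈ range (b+1), (2*b+2).choose (b-i) := by
    rw [hT, ← Finset.sum_add_distrib, Finset.mul_sum]
    apply Finset.sum_congr rfl
    intro i hi
    have hi' := mem_range.mp hi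
    have : (i+1) + (b-i) = b+1 := by omega
    rw [← Nat.mul_add, this, Nat.mul_comm]
  rw [hW, hV2, hV] at hsplit
  have : T + (2*b+2) * U = (b+1) * (2*b+1).choose b + (2*b+2) * U := by
    rw [hsplit]; ring
  exact Nat.add_right_cancel this

lemma base1 (b : ℕ) : ff b 1 = ((b:ℝ)+1) * ((2*b+1).choose b : ℝ) := by
  have h : ∀ i ∈ range (b+1),
      ((2*b+1+1).choose (b-i) : ℝ) * ((1+i).choose i : ℝ)
      = (((2*b+2).choose (b-i) * (i+1) : ℕ) : ℝ) := by
    intro i _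
    have h1 : 1+i = i+1 := by omega
    have h2 : 2*b+1+1 = 2*b+2 := by omega
    rw [h1, h2, Nat.choose_succ_self_right]
    push_cast; ring
  rw [ff, Finset.sum_congr rfl h, ← Nat.cast_sum, base1_nat]
  push_cast; ring

lemma prod_even (b : ℕ) : (∏ i ∈ range b, ((2*(i:ℝ)+2))) = 2^b * (Nat.factorial b : ℝ) := by
  induction b with
  | zero => simp
  | succ b ih =>
    rw [Finset.prod_range_succ, ih, Nat.factorial_succ]
    push_cast; ring

lemma prod_odd (b : ℕ) :
    (∏ i ∈ range b, (2*(i:ℝ)+3)) * (2^b * (Nat.factorial b : ℝ)) = ((2*b+1).factorial : ℝ) := by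
  induction b with
  | zero => simp
  | succ b ih =>
    have h2 : ((2*(b+1)+1).factorial : ℝ)
        = (2*(b:ℝ)+3)*(2*(b:ℝ)+2)*((2*b+1).factorial : ℝ) := by
      rw [show 2*(b+1)+1 = (2*b+1)+1+1 from by omega, Nat.factorial_succ, Nat.factorial_succ]
      push_cast; ring
    rw [Finset.prod_range_succ, h2, Nat.factorial_succ]
    push_cast
    linear_combination (2*(b:ℝ)+3)*2*((b:ℝ)+1) * ih

noncomputable def gg (b c : ℕ) : ℝ :=
  2^b / (Nat.factorial b : ℝ) * ∏ i ∈ range b, ((c:ℝ) + 2*i + 2)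

lemma gg0 (b : ℕ) : gg b 0 = 4^b := by
  have hf : ((Nat.factorial b : ℕ) : ℝ) ≠ 0 := by
    exact_mod_cast (Nat.factorial_pos b).ne'
  rw [gg]
  have : (∏ i ∈ range b, (((0:ℕ):ℝ) + 2*i + 2)) = ∏ i ∈ range b, (2*(i:ℝ)+2) := by
    apply Finset.prod_congr rfl; intro i _; push_cast; ring
  rw [this, prod_even]
  have h4 : (4:ℝ)^b = 2^b * 2^b := by rw [← mul_pow]; norm_num
  field_simp
  rw [h4]
  ring

lemma gg1 (b : ℕ) : gg b 1 = ((b:ℝ)+1) * ((2*b+1).choose b : ℝ) := by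
  have hf : ((Nat.factorial b : ℕ) : ℝ) ≠ 0 := by
    exact_mod_cast (Nat.factorial_pos b).ne'
  have hnat : (2*b+1).choose b * (b.factorial) * ((b+1).factorial) = (2*b+1).factorial := by
    have h := Nat.choose_mul_factorial_mul_factorial (show b ≤ 2*b+1 from by omega)
    rw [show 2*b+1-b = b+1 from by omega] at h
    exact h
  have hprod : (∏ i ∈ range b, (((1:ℕ):ℝ) + 2*i + 2)) = ∏ i ∈ range b, (2*(i:ℝ)+3) := by
    apply Finset.prod_congr rfl; intro i _; push_cast; ring
  rw [gg, hprod]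
  have h2 : (∏ i ∈ range b, (2*(i:ℝ)+3)) = ((2*b+1).factorial : ℝ) / (2^b * (Nat.factorial b : ℝ)) := by
    rw [← prod_odd b]
    field_simp
  rw [h2]
  have hcast : ((2*b+1).factorial : ℝ)
      = ((2*b+1).choose b : ℝ) * (b.factorial : ℝ) * (((b+1).factorial : ℕ) : ℝ) := by
    exact_mod_cast hnat.symm
  rw [hcast, Nat.factorial_succ]
  field_simp
  push_cast
  ring

lemma gg_rec (b c : ℕ) : gg (b+1) (c+2) = gg (b+1) c + 4 * gg b (c+2) := by
  have hf : ((Nat.factorial b : ℕ) : ℝ) ≠ 0 := by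
    exact_mod_cast (Nat.factorial_pos b).ne'
  have hB : (∏ i ∈ range (b+1), ((c:ℝ) + 2*i + 2))
      = ((c:ℝ)+2) * (∏ i ∈ range b, ((((c+2:ℕ)):ℝ) + 2*i + 2)) := by
    rw [Finset.prod_range_succ' (fun i => ((c:ℝ) + 2*i + 2)) b]
    have h' : ∀ i ∈ range b, (c:ℝ) + 2*((i+1:ℕ):ℝ) + 2 = (((c+2:ℕ)):ℝ) + 2*i + 2 := by
      intro i _; push_cast; ring
    rw [Finset.prod_congr rfl h']
    push_cast
    ring
  have hA : (∏ i ∈ range (b+1), ((((c+2:ℕ)):ℝ) + 2*i + 2))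
      = (∏ i ∈ range b, ((((c+2:ℕ)):ℝ) + 2*i + 2)) * ((((c+2:ℕ)):ℝ) + 2*b + 2) :=
    Finset.prod_range_succ _ b
  rw [gg, gg, gg, hA, hB, Nat.factorial_succ]
  push_cast
  field_simp
  ring

lemma keyE (b : ℕ) : ∀ c, ff b c = gg b c := by
  induction b with
  | zero =>
    intro c
    simp [ff, gg]
  | succ b ih =>
    have pair : ∀ c, ff (b+1) c = gg (b+1) c ∧ ff (b+1) (c+1) = gg (b+1) (c+1) := by
      intro c
      induction c with
      | zero =>
        constructor
        · rw [base0, gg0]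
        · rw [base1, gg1]
      | succ c ihc =>
        refine ⟨ihc.2, ?_⟩
        rw [show c+1+1 = c+2 from rfl, recur b c, ihc.1, ih (c+2), gg_rec]
    exact fun c => (pair c).1

theorem stmt10 (a b : ℕ) (hb : b ≤ (a - 1) / 2) :
    ∑ j ∈ Finset.range (b + 1), (a.choose j : ℝ) * ((a - 1 - b - j).choose (b - j) : ℝ)
    = if b = 0 then 1
      else 2 ^ b / (Nat.factorial b : ℝ) * ∏ j ∈ Finset.Icc 1 b, ((a : ℝ) - (2 * j - 1)) := by
  by_cases hb0 : b = 0
  · subst hb0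
    simp
  · rw [if_neg hb0]
    have h2b : b * 2 ≤ a - 1 := (Nat.le_div_iff_mul_le (by norm_num)).mp hb
    have ha1 : 1 ≤ a := by
      by_contra h
      have : a = 0 := by omega
      subst this
      simp at h2b
      omega
    set c := a - (2*b+1) with hc
    have ha : a = 2*b+1+c := by omega
    have hsum : ∑ j ∈ Finset.range (b + 1), (a.choose j : ℝ) * ((a - 1 - b - j).choose (b - j) : ℝ)
        = ff b c := by
      rw [ff, ← Finset.sum_range_reflect
        (fun j => (a.choose j : ℝ) * ((a - 1 - b - j).choose (b - j) : ℝ)) (b+1)]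
      apply Finset.sum_congr rfl
      intro i hi
      have hi' := mem_range.mp hi
      have e1 : b + 1 - 1 - i = b - i := by omega
      have e2 : a - 1 - b - (b - i) = c + i := by omega
      have e3 : b - (b - i) = i := by omega
      rw [e1, e2, e3, ha]
    have hprod : ∏ j ∈ Finset.Icc 1 b, ((a : ℝ) - (2 * j - 1))
        = ∏ i ∈ range b, ((c:ℝ) + 2*i + 2) := by
      rw [show Finset.Icc 1 b = Finset.Ico 1 (b+1) from by rw [Finset.Ico_add_one_right_eq_Icc],
          Finset.prod_Ico_eq_prod_range]
      simp only [Nat.add_sub_cancel]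
      rw [← Finset.prod_range_reflect (fun i => ((c:ℝ) + 2*i + 2)) b]
      apply Finset.prod_congr rfl
      intro i hi
      have hi' := mem_range.mp hi
      have hcast : ((b - 1 - i : ℕ) : ℝ) = (b:ℝ) - (1+i) := by
        rw [show b - 1 - i = b - (1+i) from by omega, Nat.cast_sub (by omega : 1+i ≤ b)]
        push_cast; ring
      show (a:ℝ) - (2*((1+i : ℕ):ℝ) - 1) = (c:ℝ) + 2*((b-1-i : ℕ):ℝ) + 2
      rw [hcast, ha]
      push_cast
      ring
    rw [hsum, keyE b c, gg, hprod]
end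

section
/- Fix a natural number a ≥ 1 and rate λ > 0. Let (X_k) and (Y_k) be the arrival times of two i.i.d. Poisson processes with rate λ (equivalently, X_k and Y_k are independent Gamma(k, λ) random variables for each k, with X_k independent of Y_k). Then ∑_{k=1}^{n} E[|X_k - Y_k|^a] = (a!/λ^a) · (2n/(2+a)) · Γ(n+1+a/2) / (Γ(a/2+1) · Γ(n+1)). -/
open MeasureTheory ProbabilityTheory Real Set
open scoped ENNReal NNReal

lemma integrableOn_pow_mul_exp (m : ℕ) {r : ℝ} (hr : 0 < r) :
    IntegrableOn (fun x : ℝ => x ^ m * Real.exp (-(r * x))) (Set.Ioi 0) := by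
  have h := integrableOn_rpow_mul_exp_neg_mul_rpow (s := (m:ℝ)) (p := 1) (b := r)
    (by exact_mod_cast neg_one_lt_zero.trans_le (Nat.cast_nonneg m)) zero_lt_one hr
  refine h.congr_fun (fun x hx => ?_) measurableSet_Ioi
  beta_reduce
  rw [rpow_one, rpow_natCast, neg_mul]

lemma integral_pow_mul_exp (m : ℕ) {r : ℝ} (hr : 0 < r) :
    ∫ x in Set.Ioi (0:ℝ), x ^ m * Real.exp (-(r * x)) = m.factorial / r ^ (m+1) := by
  have h := integral_rpow_mul_exp_neg_mul_Ioi (a := (m:ℝ)+1) (r := r) (by positivity) hr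
  simp only [add_sub_cancel_right] at h
  have : ∫ x in Set.Ioi (0:ℝ), x ^ m * Real.exp (-(r * x))
      = ∫ x in Set.Ioi (0:ℝ), x ^ ((m:ℝ)) * Real.exp (-(r * x)) := by
    simp [rpow_natCast]
  rw [this, h, Real.Gamma_nat_eq_factorial]
  rw [show ((m:ℝ)+1) = ((m+1 : ℕ):ℝ) by push_cast; ring, rpow_natCast]
  rw [one_div, inv_pow, inv_mul_eq_div]


lemma shift_stuff (q : ℕ) (x : ℝ) {r : ℝ} (hr : 0 < r) :
    IntegrableOn (fun y : ℝ => (y-x)^q * Real.exp (-(r*y))) (Ioi x) ∧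
    ∫ y in Ioi x, (y-x)^q * Real.exp (-(r*y))
      = Real.exp (-(r*x)) * (q.factorial / r^(q+1)) := by
  have hmp : MeasurePreserving (fun u : ℝ => u + x) volume volume :=
    measurePreserving_add_right volume x
  have hemb : MeasurableEmbedding (fun u : ℝ => u + x) :=
    (MeasurableEquiv.addRight x).measurableEmbedding
  have hpre : (fun u : ℝ => u + x) ⁻¹' (Ioi x) = Ioi 0 := by
    rw [preimage_add_const_Ioi]; simp
  have hint0 : IntegrableOn (fun u : ℝ => ((u+x)-x)^q * Real.exp (-(r*(u+x)))) (Ioi 0) := by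
    have h : IntegrableOn (fun u : ℝ => u^q * Real.exp (-(r*u)) * Real.exp (-(r*x)))
        (Ioi 0) := (integrableOn_pow_mul_exp q hr).mul_const _
    refine h.congr_fun (fun u hu => ?_) measurableSet_Ioi
    beta_reduce
    rw [mul_assoc, ← Real.exp_add, add_sub_cancel_right]
    ring_nf
  have hint : IntegrableOn (fun y : ℝ => (y-x)^q * Real.exp (-(r*y))) (Ioi x) := by
    have h := ((hmp.restrict_preimage_emb hemb (Ioi x)).integrable_comp_emb hemb
      (g := fun y : ℝ => (y-x)^q * Real.exp (-(r*y)))).mp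
    rw [hpre] at h
    exact h hint0
  refine ⟨hint, ?_⟩
  have h := hmp.setIntegral_preimage_emb hemb
    (fun y : ℝ => (y-x)^q * Real.exp (-(r*y))) (Ioi x)
  rw [hpre] at h
  rw [← h]
  have : ∀ u ∈ Ioi (0:ℝ), ((u+x)-x)^q * Real.exp (-(r*(u+x)))
      = (u^q * Real.exp (-(r*u))) * Real.exp (-(r*x)) := by
    intro u hu
    rw [mul_assoc, ← Real.exp_add, add_sub_cancel_right]
    ring_nf
  rw [setIntegral_congr_fun measurableSet_Ioi this, integral_mul_const,
    integral_pow_mul_exp q hr]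
  ring


lemma key_identity (a : ℕ) (ha : 1 ≤ a) : ∀ m : ℕ,
    ∑ j ∈ Finset.range (m+1),
        ((m.choose j : ℝ) * (a+m-j).factorial * (m+j).factorial * 2^(m-j))
      = 2^m * a.factorial * m.factorial * ∏ i ∈ Finset.Icc 1 m, ((a:ℝ) + 2*i) := by
  intro m
  induction m with
  | zero => simp
  | succ m ih =>
    set T : ℕ → ℝ := fun j => (m.choose j : ℝ) * (a+m-j).factorial * (m+j).factorial * 2^(m-j)
      with hT
    set G : ℕ → ℝ := fun j => 2*(j:ℝ)*((j:ℝ)-((a:ℝ)+m+1)) * T j with hG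
    have hTm1 : T (m+1) = 0 := by
      simp [hT, Nat.choose_succ_self]
    have hsplit : ∑ j ∈ Finset.range (m+1+1),
        (((m+1).choose j : ℝ) * (a+(m+1)-j).factorial * ((m+1)+j).factorial * 2^((m+1)-j))
      = ∑ j ∈ Finset.range (m+1),
          ((m.choose j : ℝ) * (a+m-j).factorial * (m+2+j).factorial * 2^(m-j))
        + ∑ j ∈ Finset.range (m+1),
          ((m.choose j : ℝ) * (a+m+1-j).factorial * (m+1+j).factorial * 2^(m+1-j)) := by
      rw [Finset.sum_range_succ' _ (m+1)]
      have h1 : ∀ j ∈ Finset.range (m+1),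
          (((m+1).choose (j+1) : ℝ) * (a+(m+1)-(j+1)).factorial * ((m+1)+(j+1)).factorial
              * 2^((m+1)-(j+1)))
          = ((m.choose j : ℝ) * (a+m-j).factorial * (m+2+j).factorial * 2^(m-j))
            + ((m.choose (j+1) : ℝ) * (a+m-j).factorial * (m+2+j).factorial * 2^(m-j)) := by
        intro j hj
        have e1 : a+(m+1)-(j+1) = a+m-j := by omega
        have e2 : (m+1)+(j+1) = m+2+j := by omega
        have e3 : (m+1)-(j+1) = m-j := by omega
        rw [e1, e2, e3, Nat.choose_succ_succ]
        push_cast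
        ring
      rw [Finset.sum_congr rfl h1, Finset.sum_add_distrib]
      have h4 : ∑ j ∈ Finset.range (m+1),
          ((m.choose j : ℝ) * (a+m+1-j).factorial * (m+1+j).factorial * 2^(m+1-j))
          = (∑ j ∈ Finset.range (m+1),
              ((m.choose (j+1) : ℝ) * (a+m-j).factorial * (m+2+j).factorial * 2^(m-j)))
            + (((m+1).choose 0 : ℝ) * (a+(m+1)-0).factorial * ((m+1)+0).factorial
                * 2^((m+1)-0)) := by
        rw [Finset.sum_range_succ' _ m]
        have h2 : ∀ j ∈ Finset.range m,
            ((m.choose (j+1) : ℝ) * (a+m+1-(j+1)).factorial * (m+1+(j+1)).factorial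
                * 2^(m+1-(j+1)))
            = ((m.choose (j+1) : ℝ) * (a+m-j).factorial * (m+2+j).factorial * 2^(m-j)) := by
          intro j hj
          have e1 : a+m+1-(j+1) = a+m-j := by omega
          have e2 : m+1+(j+1) = m+2+j := by omega
          have e3 : m+1-(j+1) = m-j := by omega
          rw [e1, e2, e3]
        rw [Finset.sum_congr rfl h2]
        have h3 : ∑ j ∈ Finset.range (m+1),
            ((m.choose (j+1) : ℝ) * (a+m-j).factorial * (m+2+j).factorial * 2^(m-j))
            = ∑ j ∈ Finset.range m,
            ((m.choose (j+1) : ℝ) * (a+m-j).factorial * (m+2+j).factorial * 2^(m-j)) := by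
          rw [Finset.sum_range_succ, Nat.choose_succ_self]
          simp
        rw [h3]
        have e0 : a+(m+1) = a+m+1 := by omega
        rw [e0]
        norm_num
      rw [h4]
      ring
    rw [hsplit]
    have hstep : ∀ j ∈ Finset.range (m+1),
        ((m.choose j : ℝ) * (a+m-j).factorial * (m+2+j).factorial * 2^(m-j))
        + ((m.choose j : ℝ) * (a+m+1-j).factorial * (m+1+j).factorial * 2^(m+1-j))
        = 2*((m:ℝ)+1)*((a:ℝ)+2*m+2) * T j + (G (j+1) - G j) := by
      intro j hj
      rw [Finset.mem_range] at hj
      have hjm : j ≤ m := by omega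
      rcases eq_or_lt_of_le hjm with rfl | hlt
      · -- j = m
        have e1 : a+j-j = a := by omega
        have e2 : a+j+1-j = a+1 := by omega
        have e3 : j-j = 0 := by omega
        have e4 : j+1-j = 1 := by omega
        have e5 : j+2+j = (j+1+j)+1 := by omega
        have e6 : j+1+j = (j+j)+1 := by omega
        have hG1 : G (j+1) = 0 := by
          rw [hG]; simp only; rw [hTm1]; ring
        rw [hG1, hG, hT]
        simp only [e1, e2, e3, e4, e5, e6, Nat.factorial_succ, Nat.choose_self]
        push_cast
        ring
      · -- j < m
        have hc : (m.choose (j+1):ℝ) * ((j:ℝ)+1) = (m.choose j:ℝ) * ((m:ℝ)-(j:ℝ)) := by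
          have h := Nat.choose_succ_right_eq m j
          have h2 : ((m.choose (j+1) * (j+1) : ℕ) : ℝ) = ((m.choose j * (m-j) : ℕ):ℝ) :=
            congrArg (fun n : ℕ => (n:ℝ)) h
          push_cast [Nat.cast_sub hjm] at h2
          linarith [h2]
        have hj1 : ((j:ℝ)+1) ≠ 0 := by positivity
        have hc' : (m.choose (j+1):ℝ) = (m.choose j:ℝ) * ((m:ℝ)-(j:ℝ)) / ((j:ℝ)+1) := by
          field_simp
          linarith [hc]
        obtain ⟨K, hK⟩ : ∃ K, a+m-j = K+1 := ⟨a+m-j-1, by omega⟩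
        obtain ⟨L, hL⟩ : ∃ L, m-j = L+1 := ⟨m-j-1, by omega⟩
        have e1 : a+m+1-j = (K+1)+1 := by omega
        have e2 : a+m-j = K+1 := hK
        have e3 : m+2+j = ((m+j)+1)+1 := by omega
        have e4 : m+1+j = (m+j)+1 := by omega
        have e5 : m+1-j = (L+1)+1 := by omega
        have e6 : m-j = L+1 := hL
        have e7 : a+m-(j+1) = K := by omega
        have e8 : m+(j+1) = (m+j)+1 := by omega
        have e9 : m-(j+1) = L := by omega
        have c1 : ((K : ℕ):ℝ) = (a:ℝ)+(m:ℝ)-(j:ℝ)-1 := by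
          have h := congrArg (fun n : ℕ => (n:ℝ)) (show a+m = K+1+j by omega)
          push_cast at h
          linarith
        rw [hG, hT]
        simp only [e1, e2, e3, e4, e5, e6, e7, e8, e9, Nat.factorial_succ, pow_succ, hc']
        push_cast [c1]
        field_simp
        ring
    calc (∑ j ∈ Finset.range (m+1),
          ((m.choose j : ℝ) * (a+m-j).factorial * (m+2+j).factorial * 2^(m-j)))
        + ∑ j ∈ Finset.range (m+1),
          ((m.choose j : ℝ) * (a+m+1-j).factorial * (m+1+j).factorial * 2^(m+1-j))
        = ∑ j ∈ Finset.range (m+1),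
            (2*((m:ℝ)+1)*((a:ℝ)+2*m+2) * T j + (G (j+1) - G j)) := by
          rw [← Finset.sum_add_distrib]
          exact Finset.sum_congr rfl hstep
      _ = 2*((m:ℝ)+1)*((a:ℝ)+2*m+2) * (∑ j ∈ Finset.range (m+1), T j)
            + (G (m+1) - G 0) := by
          rw [Finset.sum_add_distrib, ← Finset.mul_sum, Finset.sum_range_sub]
      _ = 2*((m:ℝ)+1)*((a:ℝ)+2*m+2)
            * (2^m * a.factorial * m.factorial * ∏ i ∈ Finset.Icc 1 m, ((a:ℝ) + 2*i)) := by
          have hG1 : G (m+1) = 0 := by rw [hG]; simp only; rw [hTm1]; ring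
          have hG0 : G 0 = 0 := by rw [hG]; simp
          rw [hG1, hG0, ih]
          ring
      _ = 2^(m+1) * a.factorial * (m+1).factorial * ∏ i ∈ Finset.Icc 1 (m+1), ((a:ℝ) + 2*i) := by
          rw [Finset.prod_Icc_succ_top (by omega : 1 ≤ m+1)]
          push_cast [Nat.factorial_succ]
          ring


lemma per_k {lam : ℝ} (hlam : 0 < lam) (a : ℕ) (ha : 1 ≤ a) (m : ℕ) :
    ∫ p : ℝ × ℝ, |p.1 - p.2| ^ a
        ∂((gammaMeasure (↑(m+1)) lam).prod (gammaMeasure (↑(m+1)) lam))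
      = (a.factorial : ℝ) / lam ^ a * ∏ i ∈ Finset.Icc 1 m, (((a:ℝ) + 2*i)/(2*i)) := by
  have ha' : a ≠ 0 := by omega
  set c : ℝ := lam^(m+1) / (m.factorial : ℝ) with hc
  have hcpos : 0 < c := by positivity
  have hρ : ((m+1:ℕ):ℝ) = (m:ℝ)+1 := by push_cast; ring
  set μ : Measure ℝ := gammaMeasure (↑(m+1)) lam with hμdef
  have hμ : μ = volume.withDensity (gammaPDF (↑(m+1)) lam) := rfl
  have hpm : IsProbabilityMeasure μ := isProbabilityMeasure_gammaMeasure (by rw [hρ]; positivity) hlam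
  have hgx : ∀ x : ℝ, 0 ≤ x →
      gammaPDFReal (↑(m+1)) lam x = c * (x^m * Real.exp (-(lam*x))) := by
    intro x hx
    simp only [gammaPDFReal, if_pos hx]
    rw [Real.rpow_natCast lam (m+1)]
    rw [show ((m+1:ℕ):ℝ) - 1 = ((m:ℕ):ℝ) by push_cast; ring, Real.rpow_natCast x m]
    rw [hρ, Real.Gamma_nat_eq_factorial]
    ring
  have hpdf_meas : Measurable (gammaPDF (↑(m+1)) lam) :=
    (measurable_gammaPDFReal _ _).ennreal_ofReal
  have hgnonneg : ∀ x : ℝ, 0 ≤ gammaPDFReal (↑(m+1)) lam x :=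
    gammaPDFReal_nonneg (by rw [hρ]; positivity) hlam
  -- the main nonnegative kernel
  set F : ℝ → ℝ → ℝ≥0∞ := fun x y => gammaPDF (↑(m+1)) lam x *
      (gammaPDF (↑(m+1)) lam y * ENNReal.ofReal (max (y-x) 0 ^ a)) with hF
  -- measurability helpers
  have hmax_meas : Measurable (fun p : ℝ × ℝ => ENNReal.ofReal (max (p.2 - p.1) 0 ^ a)) := by
    fun_prop
  have hF_meas : Measurable (Function.uncurry F) := by
    apply ((hpdf_meas.comp measurable_fst).mul
      ((hpdf_meas.comp measurable_snd).mul hmax_meas))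
  -- step 1 : to lintegral
  have h1 : ∫ p : ℝ × ℝ, |p.1 - p.2| ^ a ∂(μ.prod μ)
      = (∫⁻ p : ℝ × ℝ, ENNReal.ofReal (|p.1 - p.2| ^ a) ∂(μ.prod μ)).toReal := by
    rw [integral_eq_lintegral_of_nonneg_ae (ae_of_all _ fun p => pow_nonneg (abs_nonneg _) a)
      ((by fun_prop : Measurable fun p : ℝ × ℝ => |p.1 - p.2| ^ a).aestronglyMeasurable)]
  -- step 2+3+4+5 : symmetrize
  have habs : ∀ x y : ℝ, ENNReal.ofReal (|x-y|^a)
      = ENNReal.ofReal (max (y-x) 0 ^ a) + ENNReal.ofReal (max (x-y) 0 ^ a) := by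
    intro x y
    rcases le_total x y with h | h
    · rw [abs_of_nonpos (by linarith), max_eq_left (by linarith), max_eq_right (by linarith),
        zero_pow ha', ENNReal.ofReal_zero, add_zero, neg_sub]
    · rw [abs_of_nonneg (by linarith), max_eq_right (by linarith), max_eq_left (by linarith),
        zero_pow ha', ENNReal.ofReal_zero, zero_add]
  have hm1 : Measurable (Function.uncurry fun x y : ℝ => ENNReal.ofReal (max (y-x) 0 ^ a)) := by
    fun_prop
  have hm2 : Measurable (Function.uncurry fun x y : ℝ => ENNReal.ofReal (max (x-y) 0 ^ a)) := by
    fun_prop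
  have h2 : ∫⁻ p : ℝ × ℝ, ENNReal.ofReal (|p.1 - p.2| ^ a) ∂(μ.prod μ)
      = 2 * ∫⁻ x, ∫⁻ y, F x y := by
    have hswap : ∫⁻ x, ∫⁻ y, ENNReal.ofReal (max (x-y) 0 ^ a) ∂μ ∂μ
        = ∫⁻ x, ∫⁻ y, ENNReal.ofReal (max (y-x) 0 ^ a) ∂μ ∂μ :=
      lintegral_lintegral_swap hm2.aemeasurable
    have hmono : ∫⁻ p : ℝ × ℝ, ENNReal.ofReal (|p.1 - p.2| ^ a) ∂(μ.prod μ)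
        = 2 * ∫⁻ x, ∫⁻ y, ENNReal.ofReal (max (y-x) 0 ^ a) ∂μ ∂μ := by
      rw [lintegral_prod _ (by fun_prop : Measurable fun p : ℝ × ℝ =>
        ENNReal.ofReal (|p.1 - p.2| ^ a)).aemeasurable]
      calc ∫⁻ x, ∫⁻ y, ENNReal.ofReal (|x - y| ^ a) ∂μ ∂μ
          = ∫⁻ x, ((∫⁻ y, ENNReal.ofReal (max (y-x) 0 ^ a) ∂μ)
              + ∫⁻ y, ENNReal.ofReal (max (x-y) 0 ^ a) ∂μ) ∂μ := by
            apply lintegral_congr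
            intro x
            rw [← lintegral_add_left (by fun_prop)]
            exact lintegral_congr fun y => habs x y
        _ = (∫⁻ x, ∫⁻ y, ENNReal.ofReal (max (y-x) 0 ^ a) ∂μ ∂μ)
              + ∫⁻ x, ∫⁻ y, ENNReal.ofReal (max (x-y) 0 ^ a) ∂μ ∂μ := by
            apply lintegral_add_left
            exact hm1.lintegral_prod_right
        _ = 2 * ∫⁻ x, ∫⁻ y, ENNReal.ofReal (max (y-x) 0 ^ a) ∂μ ∂μ := by
            rw [hswap, two_mul]
    rw [hmono]
    congr 1
    -- unfold densities
    calc ∫⁻ x, ∫⁻ y, ENNReal.ofReal (max (y-x) 0 ^ a) ∂μ ∂μ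
        = ∫⁻ x, (∫⁻ y, gammaPDF (↑(m+1)) lam y * ENNReal.ofReal (max (y-x) 0 ^ a)) ∂μ := by
          apply lintegral_congr
          intro x
          rw [hμ, lintegral_withDensity_eq_lintegral_mul _ hpdf_meas (by fun_prop)]
          rfl
      _ = ∫⁻ x, (gammaPDF (↑(m+1)) lam x
            * ∫⁻ y, gammaPDF (↑(m+1)) lam y * ENNReal.ofReal (max (y-x) 0 ^ a)) := by
          rw [hμ, lintegral_withDensity_eq_lintegral_mul _ hpdf_meas
            (Measurable.lintegral_prod_right (f := fun x y : ℝ =>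
              gammaPDF (↑(m+1)) lam y * ENNReal.ofReal (max (y-x) 0 ^ a)) (by fun_prop))]
          rfl
      _ = ∫⁻ x, ∫⁻ y, F x y := by
          apply lintegral_congr
          intro x
          rw [lintegral_const_mul _ (by fun_prop)]
  -- inner integral for x > 0
  set SS : ℝ → ℝ := fun x => ∑ j ∈ Finset.range (m+1),
      (m.choose j : ℝ) * c * x^j *
        (Real.exp (-(lam*x)) * ((a+(m-j)).factorial / lam^(a+(m-j)+1))) with hSS
  have hinner : ∀ x : ℝ, 0 < x →
      (∫⁻ y, gammaPDF (↑(m+1)) lam y * ENNReal.ofReal (max (y-x) 0 ^ a))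
        = ENNReal.ofReal (SS x) := by
    intro x hx
    set φ : ℝ → ℝ := fun y => c * (y^m * Real.exp (-(lam*y))) * (y-x)^a with hφ
    set ψ : ℕ → ℝ → ℝ := fun j y => ((m.choose j : ℝ) * c * x^j) *
        ((y-x)^(a+(m-j)) * Real.exp (-(lam*y))) with hψ
    have hφψ : ∀ y : ℝ, φ y = ∑ j ∈ Finset.range (m+1), ψ j y := by
      intro y
      have hb := add_pow x (y-x) m
      rw [show x + (y-x) = y by ring] at hb
      simp only [hφ, hψ, hb, Finset.sum_mul, Finset.mul_sum]
      apply Finset.sum_congr rfl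
      intro j hj
      rw [pow_add (y-x) a (m-j)]
      ring
    have hψint : ∀ j ∈ Finset.range (m+1), IntegrableOn (ψ j) (Ioi x) := by
      intro j hj
      exact ((shift_stuff (a+(m-j)) x hlam).1).const_mul _
    have hφint : IntegrableOn φ (Ioi x) := by
      have h := integrable_finset_sum (μ := volume.restrict (Ioi x)) (Finset.range (m+1))
        (fun j hj => hψint j hj)
      exact h.congr (ae_of_all _ fun y => (hφψ y).symm)
    have hstep1 : (fun y : ℝ => gammaPDF (↑(m+1)) lam y * ENNReal.ofReal (max (y-x) 0 ^ a))
        = (Ioi x).indicator (fun y => gammaPDF (↑(m+1)) lam y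
            * ENNReal.ofReal (max (y-x) 0 ^ a)) := by
      ext y
      by_cases h : y ∈ Ioi x
      · rw [indicator_of_mem h]
      · rw [indicator_of_notMem h, max_eq_right (by simp only [mem_Ioi, not_lt] at h; linarith),
          zero_pow ha', ENNReal.ofReal_zero, mul_zero]
    rw [hstep1, lintegral_indicator measurableSet_Ioi _]
    have hstep2 : ∫⁻ y in Ioi x, gammaPDF (↑(m+1)) lam y * ENNReal.ofReal (max (y-x) 0 ^ a)
        = ∫⁻ y in Ioi x, ENNReal.ofReal (φ y) := by
      apply setLIntegral_congr_fun measurableSet_Ioi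
      intro y hy
      have hy0 : (0:ℝ) ≤ y := le_of_lt (lt_trans hx hy)
      beta_reduce
      rw [max_eq_left (by simp only [mem_Ioi] at hy; linarith), gammaPDF_of_nonneg hy0]
      rw [show lam ^ (↑(m+1):ℝ) / Real.Gamma (↑(m+1)) * y ^ ((↑(m+1):ℝ)-1)
          * Real.exp (-(lam*y)) = gammaPDFReal (↑(m+1)) lam y by
        simp only [gammaPDFReal, if_pos hy0]]
      rw [hgx y hy0, ← ENNReal.ofReal_mul (by positivity)]
    rw [hstep2]
    rw [← ofReal_integral_eq_lintegral_ofReal hφint (by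
      rw [Filter.EventuallyLE, ae_restrict_iff' measurableSet_Ioi]
      refine ae_of_all _ fun y hy => ?_
      have h1 : (0:ℝ) ≤ y - x := by simp only [mem_Ioi] at hy; linarith
      have hy0 : (0:ℝ) ≤ y := le_of_lt (lt_trans hx hy)
      simp only [Pi.zero_apply, hφ]
      exact mul_nonneg (mul_nonneg hcpos.le (mul_nonneg (pow_nonneg hy0 m)
        (Real.exp_nonneg _))) (pow_nonneg h1 a))]
    congr 1
    rw [setIntegral_congr_fun measurableSet_Ioi (fun y _ => hφψ y),
      integral_finset_sum _ hψint]
    simp only [hψ, hSS]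
    apply Finset.sum_congr rfl
    intro j hj
    rw [integral_const_mul, (shift_stuff (a+(m-j)) x hlam).2]
  set W : ℝ → ℝ := fun x => ∑ j ∈ Finset.range (m+1),
      (m.choose j : ℝ) * (c*c) * ((a+(m-j)).factorial / lam^(a+(m-j)+1)) *
        (x^(m+j) * Real.exp (-((2*lam)*x))) with hW
  have hWeq : ∀ x : ℝ, 0 < x → c * (x^m * Real.exp (-(lam*x))) * SS x = W x := by
    intro x hx
    simp only [hSS, hW, Finset.mul_sum]
    apply Finset.sum_congr rfl
    intro j hj
    rw [show Real.exp (-((2*lam)*x)) = Real.exp (-(lam*x)) * Real.exp (-(lam*x)) by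
      rw [← Real.exp_add]; congr 1; ring]
    ring
  have hWintOn : IntegrableOn W (Ioi 0) := by
    have h : IntegrableOn (fun x : ℝ => ∑ j ∈ Finset.range (m+1),
        (m.choose j : ℝ) * (c*c) * ((a+(m-j)).factorial / lam^(a+(m-j)+1)) *
          (x^(m+j) * Real.exp (-((2*lam)*x)))) (Ioi 0) := by
      apply integrable_finset_sum
      intro j hj
      exact (integrableOn_pow_mul_exp (m+j) (by positivity : (0:ℝ) < 2*lam)).const_mul _
    exact h
  have hWnn : 0 ≤ᵐ[volume.restrict (Ioi 0)] W := by
    rw [Filter.EventuallyLE, ae_restrict_iff' measurableSet_Ioi]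
    refine ae_of_all _ fun x hx => ?_
    have hx0 : (0:ℝ) < x := hx
    simp only [Pi.zero_apply, hW]
    apply Finset.sum_nonneg
    intro j hj
    exact mul_nonneg (by positivity)
      (mul_nonneg (pow_nonneg hx0.le _) (Real.exp_nonneg _))
  have houter : ∫⁻ x, ∫⁻ y, F x y = ENNReal.ofReal (∫ x in Ioi 0, W x) := by
    have hsplit : ∫⁻ x, ∫⁻ y, F x y
        = (∫⁻ x in Ioi 0, ∫⁻ y, F x y) + ∫⁻ x in Iic 0, ∫⁻ y, F x y := by
      rw [← lintegral_add_compl (f := fun x => ∫⁻ y, F x y) measurableSet_Ioi, compl_Ioi]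
    have hneg : ∫⁻ x in Iic 0, ∫⁻ y, F x y = 0 := by
      have hres : volume.restrict (Iic (0:ℝ)) = volume.restrict (Iio 0) :=
        (Measure.restrict_congr_set Iio_ae_eq_Iic).symm
      calc ∫⁻ x in Iic 0, ∫⁻ y, F x y = ∫⁻ x in Iio 0, ∫⁻ y, F x y := by rw [hres]
        _ = ∫⁻ x in Iio 0, 0 := setLIntegral_congr_fun measurableSet_Iio
            (fun x hx => by simp [hF, gammaPDF_of_neg hx])
        _ = 0 := by simp
    have hpos : ∫⁻ x in Ioi 0, ∫⁻ y, F x y = ∫⁻ x in Ioi 0, ENNReal.ofReal (W x) := by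
      apply setLIntegral_congr_fun measurableSet_Ioi
      refine fun x hx => ?_
      have hx0 : (0:ℝ) < x := hx
      calc ∫⁻ y, F x y = gammaPDF (↑(m+1)) lam x * ∫⁻ y, gammaPDF (↑(m+1)) lam y
            * ENNReal.ofReal (max (y-x) 0 ^ a) := lintegral_const_mul _ (by fun_prop)
        _ = ENNReal.ofReal (W x) := by
            rw [hinner x hx0, gammaPDF_of_nonneg hx0.le,
              show lam ^ (↑(m+1):ℝ) / Real.Gamma (↑(m+1)) * x ^ ((↑(m+1):ℝ)-1)
                  * Real.exp (-(lam*x)) = gammaPDFReal (↑(m+1)) lam x from by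
                simp only [gammaPDFReal, if_pos hx0.le],
              hgx x hx0.le, ← ENNReal.ofReal_mul (by positivity), hWeq x hx0]
    rw [hsplit, hneg, add_zero, hpos,
      ← ofReal_integral_eq_lintegral_ofReal hWintOn hWnn]
  have hWint : ∫ x in Ioi 0, W x = ∑ j ∈ Finset.range (m+1),
      (m.choose j : ℝ) * (c*c) * ((a+(m-j)).factorial / lam^(a+(m-j)+1)) *
        ((m+j).factorial / (2*lam)^(m+j+1)) := by
    have h0 : ∫ x in Ioi (0:ℝ), W x = ∑ j ∈ Finset.range (m+1), ∫ x in Ioi (0:ℝ),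
        (m.choose j : ℝ) * (c*c) * ((a+(m-j)).factorial / lam^(a+(m-j)+1)) *
          (x^(m+j) * Real.exp (-((2*lam)*x))) := by
      apply integral_finset_sum
      intro j hj
      exact (integrableOn_pow_mul_exp (m+j) (by positivity : (0:ℝ) < 2*lam)).const_mul _
    rw [h0]
    apply Finset.sum_congr rfl
    intro j hj
    rw [integral_const_mul, integral_pow_mul_exp (m+j) (by positivity : (0:ℝ) < 2*lam)]
  have hWnonneg : 0 ≤ ∫ x in Ioi 0, W x := by
    rw [hWint]
    apply Finset.sum_nonneg
    intro j hj
    positivity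
  rw [h1, h2, houter, ENNReal.toReal_mul, ENNReal.toReal_ofReal hWnonneg, hWint]
  simp only [ENNReal.toReal_ofNat]
  have hterm : ∀ j ∈ Finset.range (m+1),
      2 * ((m.choose j : ℝ) * (c*c) * ((a+(m-j)).factorial / lam^(a+(m-j)+1)) *
        ((m+j).factorial / (2*lam)^(m+j+1)))
      = (1/((m.factorial:ℝ)^2 * lam^a * 4^m)) *
          ((m.choose j : ℝ) * (a+m-j).factorial * (m+j).factorial * 2^(m-j)) := by
    intro j hj
    rw [Finset.mem_range] at hj
    have hjm : j ≤ m := by omega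
    obtain ⟨d, hd⟩ : ∃ d, m = j + d := ⟨m - j, by omega⟩
    have e1 : a+(m-j) = a+d := by omega
    have e2 : a+m-j = a+d := by omega
    have e3 : m-j = d := by omega
    rw [e1, e2, e3, hc, mul_pow]
    rw [show (4:ℝ)^m = 2^(m+m) by rw [show (4:ℝ) = 2*2 by norm_num, mul_pow, ← pow_add]]
    rw [show m+1 = j+d+1 by omega, show m+j+1 = j+j+d+1 by omega,
      show m+m = j+j+d+d by omega]
    have hmf : ((m.factorial:ℝ)) ≠ 0 := by positivity
    have hlne : lam ≠ 0 := ne_of_gt hlam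
    field_simp
    ring
  rw [Finset.mul_sum, Finset.sum_congr rfl hterm, ← Finset.mul_sum, key_identity a ha m]
  have hQ : ∏ i ∈ Finset.Icc 1 m, (((a:ℝ)+2*i)/(2*i))
      = (∏ i ∈ Finset.Icc 1 m, ((a:ℝ)+2*i))/(2^m * m.factorial) := by
    rw [Finset.prod_div_distrib]
    congr 1
    rw [Finset.prod_mul_distrib, Finset.prod_const, Nat.card_Icc]
    simp only [add_tsub_cancel_right]
    congr 1
    rw [← Nat.cast_prod, ← Finset.Ico_add_one_right_eq_Icc, Finset.prod_Ico_id_eq_factorial]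
  rw [hQ, show (4:ℝ)^m = 2^m*2^m by rw [← mul_pow]; norm_num]
  have hmf : ((m.factorial:ℝ)) ≠ 0 := by positivity
  have h2m : ((2:ℝ))^m ≠ 0 := by positivity
  have hlne : lam^a ≠ 0 := by positivity
  field_simp


lemma gamma_ratio (a n : ℕ) :
    Real.Gamma ((n:ℝ)+1+(a:ℝ)/2) = Real.Gamma ((a:ℝ)/2+1) * ∏ i ∈ Finset.Icc 1 n, ((a:ℝ)/2+i) := by
  induction n with
  | zero =>
    rw [show ((0:ℕ):ℝ)+1+(a:ℝ)/2 = (a:ℝ)/2+1 by push_cast; ring]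
    simp
  | succ n ih =>
    have hpos : (0:ℝ) < (n:ℝ)+1+(a:ℝ)/2 := by positivity
    rw [show ((n+1:ℕ):ℝ)+1+(a:ℝ)/2 = ((n:ℝ)+1+(a:ℝ)/2)+1 by push_cast; ring,
      Real.Gamma_add_one (ne_of_gt hpos), ih,
      Finset.prod_Icc_succ_top (by omega : 1 ≤ n+1)]
    push_cast
    ring

lemma telescope (a : ℕ) (n : ℕ) :
    ∑ k ∈ Finset.Icc 1 n, ∏ i ∈ Finset.Icc 1 (k-1), (((a:ℝ)+2*i)/(2*i))
      = 2*(n:ℝ)/(2+(a:ℝ)) * ∏ i ∈ Finset.Icc 1 n, (((a:ℝ)+2*i)/(2*i)) := by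
  have ha2 : (2:ℝ)+(a:ℝ) ≠ 0 := by positivity
  induction n with
  | zero => simp
  | succ n ih =>
    rw [Finset.sum_Icc_succ_top (by omega : 1 ≤ n+1), ih,
      Finset.prod_Icc_succ_top (by omega : 1 ≤ n+1),
      show n+1-1 = n from rfl]
    have hn1 : ((n:ℝ)+1) ≠ 0 := by positivity
    set Q := ∏ i ∈ Finset.Icc 1 n, (((a:ℝ)+2*(i:ℝ))/(2*(i:ℝ))) with hQd
    push_cast
    field_simp
    ring

theorem stmt14 (a : ℕ) (ha : 1 ≤ a) (lam : ℝ) (hlam : 0 < lam) (n : ℕ) :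
    ∑ k ∈ Finset.Icc 1 n,
        ∫ p : ℝ × ℝ, |p.1 - p.2| ^ a
          ∂((gammaMeasure k lam).prod (gammaMeasure k lam))
    = (Nat.factorial a : ℝ) / lam ^ a * (2 * n / (2 + a)) *
        (Real.Gamma ((n : ℝ) + 1 + a / 2) /
          (Real.Gamma ((a : ℝ) / 2 + 1) * Real.Gamma ((n : ℝ) + 1))) := by
  have h1 : ∀ k ∈ Finset.Icc 1 n,
      (∫ p : ℝ × ℝ, |p.1 - p.2| ^ a
          ∂((gammaMeasure k lam).prod (gammaMeasure k lam)))
        = (a.factorial : ℝ) / lam ^ a * ∏ i ∈ Finset.Icc 1 (k-1), (((a:ℝ) + 2*i)/(2*i)) := by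
    intro k hk
    rw [Finset.mem_Icc] at hk
    obtain ⟨m, rfl⟩ : ∃ m, k = m+1 := ⟨k-1, by omega⟩
    exact per_k hlam a ha m
  rw [Finset.sum_congr rfl h1, ← Finset.mul_sum, telescope a n, gamma_ratio a n,
    Real.Gamma_nat_eq_factorial n]
  have hP : ∏ i ∈ Finset.Icc 1 n, (((a:ℝ)+2*i)/(2*i))
      = (∏ i ∈ Finset.Icc 1 n, ((a:ℝ)/2+i))/(n.factorial : ℝ) := by
    have hco : ∀ i ∈ Finset.Icc 1 n, ((a:ℝ)+2*i)/(2*i) = ((a:ℝ)/2+i)/i := by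
      intro i hi
      rw [Finset.mem_Icc] at hi
      have hi0 : (0:ℝ) < (i:ℝ) := by
        have : 1 ≤ i := hi.1
        positivity
      rw [div_eq_div_iff (by positivity) (ne_of_gt hi0)]
      ring
    rw [Finset.prod_congr rfl hco, Finset.prod_div_distrib]
    congr 1
    rw [← Nat.cast_prod, ← Finset.Ico_add_one_right_eq_Icc, Finset.prod_Ico_id_eq_factorial]
  rw [hP]
  have hG : Real.Gamma ((a:ℝ)/2+1) ≠ 0 := ne_of_gt (Real.Gamma_pos_of_pos (by positivity))
  have hnf : ((n.factorial : ℝ)) ≠ 0 := by positivity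
  field_simp
end

section
/- For a fixed real b ≥ 1, let X_1,...,X_n and Y_1,...,Y_n be the first n arrival times of two i.i.d. Poisson processes with rate λ = n. Then the expected cost ∑_{k=1}^{n} E[|X_k - Y_k|^b] of the matching {X_k, Y_k} is Θ(n^{1 - b/2}); that is, there exist constants 0 < c ≤ C such that c·n^{1-b/2} ≤ ∑_{k=1}^{n} E[|X_k - Y_k|^b] ≤ C·n^{1-b/2} for all n ≥ 1. -/
open MeasureTheory ProbabilityTheory Real
open scoped ENNReal NNReal

namespace Stmt19Aux

lemma gamma_lint {a r a' r' c : ℝ} (ha' : 0 < a') (hr' : 0 < r')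
    (hc : 0 ≤ c) {g : ℝ → ℝ} (hg : Measurable g) (hg0 : ∀ x, 0 ≤ x → 0 ≤ g x)
    (h : ∀ x, 0 ≤ x → g x * gammaPDFReal a r x = c * gammaPDFReal a' r' x) :
    ∫⁻ x, ENNReal.ofReal (g x) ∂(gammaMeasure a r) = ENNReal.ofReal c := by
  have hpdf : Measurable (gammaPDF a r) := (measurable_gammaPDFReal a r).ennreal_ofReal
  have hpdf' : Measurable (gammaPDF a' r') := (measurable_gammaPDFReal a' r').ennreal_ofReal
  rw [gammaMeasure, lintegral_withDensity_eq_lintegral_mul _ hpdf hg.ennreal_ofReal]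
  have H : ∀ x, (gammaPDF a r * fun x => ENNReal.ofReal (g x)) x
      = ENNReal.ofReal c * gammaPDF a' r' x := by
    intro x
    rcases lt_or_ge x 0 with hx | hx
    · simp [gammaPDF_of_neg hx, gammaPDF_of_neg (a := a') (r := r') hx]
    · simp only [Pi.mul_apply, gammaPDF]
      rw [mul_comm, ← ENNReal.ofReal_mul (hg0 x hx), h x hx, ENNReal.ofReal_mul hc]
  simp_rw [H]
  rw [lintegral_const_mul _ hpdf', lintegral_gammaPDF_eq_one ha' hr', mul_one]

variable {a r : ℝ}

lemma gamma_lint_exp (ha : 0 < a) (hr : 0 < r) {t : ℝ} (ht : t < r) :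
    ∫⁻ x, ENNReal.ofReal (exp (t * x)) ∂(gammaMeasure a r)
      = ENNReal.ofReal ((r / (r - t)) ^ a) := by
  have hrt : 0 < r - t := by linarith
  have hG : Gamma a ≠ 0 := (Gamma_pos_of_pos ha).ne'
  have h1 : ((r - t) ^ a : ℝ) ≠ 0 := (rpow_pos_of_pos hrt a).ne'
  refine gamma_lint (a' := a) (r' := r - t) ha hrt (by positivity) (by fun_prop)
    (fun x _ => (exp_pos _).le) ?_
  intro x hx
  unfold gammaPDFReal
  rw [if_pos hx, if_pos hx, Real.div_rpow hr.le hrt.le]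
  have he : exp (-((r - t) * x)) = exp (t * x) * exp (-(r * x)) := by
    rw [← Real.exp_add]; congr 1; ring
  rw [he]
  field_simp

lemma gamma_lint_id (ha : 0 < a) (hr : 0 < r) :
    ∫⁻ x, ENNReal.ofReal x ∂(gammaMeasure a r) = ENNReal.ofReal (a / r) := by
  have hG : Gamma a ≠ 0 := (Gamma_pos_of_pos ha).ne'
  refine gamma_lint (a' := a + 1) (r' := r) (by linarith) hr (by positivity) measurable_id (fun x hx => hx) ?_
  intro x hx
  unfold gammaPDFReal
  rw [if_pos hx, if_pos hx, show a + 1 - 1 = a by ring, Real.Gamma_add_one ha.ne',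
    Real.rpow_add_one hr.ne']
  rcases eq_or_lt_of_le hx with h0 | h0
  · rw [← h0, Real.zero_rpow ha.ne']; simp
  · have h1 : x ^ a = x ^ (a - 1) * x := by
      rw [← Real.rpow_add_one h0.ne']; congr 1; ring
    rw [h1]; field_simp

lemma gamma_lint_sq (ha : 0 < a) (hr : 0 < r) :
    ∫⁻ x, ENNReal.ofReal (x ^ 2) ∂(gammaMeasure a r)
      = ENNReal.ofReal (a * (a + 1) / r ^ 2) := by
  have hG : Gamma a ≠ 0 := (Gamma_pos_of_pos ha).ne'
  have ha1 : (0:ℝ) < a + 1 := by linarith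
  have ha2 : (0:ℝ) < a + 2 := by linarith
  refine gamma_lint (a' := a + 2) (r' := r) ha2 hr (by positivity) (by fun_prop) (fun x hx => by positivity) ?_
  intro x hx
  unfold gammaPDFReal
  rw [if_pos hx, if_pos hx, show a + 2 - 1 = a + 1 by ring,
    show a + 2 = a + 1 + 1 by ring, Real.Gamma_add_one ha1.ne', Real.Gamma_add_one ha.ne',
    Real.rpow_add_one hr.ne', Real.rpow_add_one hr.ne']
  rcases eq_or_lt_of_le hx with h0 | h0
  · rw [← h0, Real.zero_rpow ha1.ne']; simp
  · have h1 : x ^ (a + 1) = x ^ (a - 1) * x ^ 2 := by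
      rw [← Real.rpow_natCast x 2, ← Real.rpow_add h0]; congr 1; push_cast; ring
    rw [h1]; field_simp

lemma integral_eq_of_lintegral {α : Type*} [MeasurableSpace α] {μ : Measure α} {f : α → ℝ}
    {c : ℝ} (hf : AEStronglyMeasurable f μ) (h0 : 0 ≤ᵐ[μ] f)
    (hl : ∫⁻ x, ENNReal.ofReal (f x) ∂μ = ENNReal.ofReal c) (hc : 0 ≤ c) :
    Integrable f μ ∧ ∫ x, f x ∂μ = c := by
  have hint : Integrable f μ := by
    refine ⟨hf, ?_⟩
    rw [hasFiniteIntegral_iff_ofReal h0, hl]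
    exact ENNReal.ofReal_lt_top
  exact ⟨hint, by rw [integral_eq_lintegral_of_nonneg_ae h0 hf, hl, ENNReal.toReal_ofReal hc]⟩

lemma integral_le_of_lintegral_le {α : Type*} [MeasurableSpace α] {μ : Measure α} {f : α → ℝ}
    {c : ℝ} (hf : AEStronglyMeasurable f μ) (h0 : 0 ≤ᵐ[μ] f)
    (hl : ∫⁻ x, ENNReal.ofReal (f x) ∂μ ≤ ENNReal.ofReal c) (hc : 0 ≤ c) :
    Integrable f μ ∧ ∫ x, f x ∂μ ≤ c := by
  have hint : Integrable f μ := by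
    refine ⟨hf, ?_⟩
    rw [hasFiniteIntegral_iff_ofReal h0]
    exact lt_of_le_of_lt hl ENNReal.ofReal_lt_top
  refine ⟨hint, ?_⟩
  rw [integral_eq_lintegral_of_nonneg_ae h0 hf]
  calc (∫⁻ x, ENNReal.ofReal (f x) ∂μ).toReal ≤ (ENNReal.ofReal c).toReal :=
        ENNReal.toReal_mono ENNReal.ofReal_ne_top hl
    _ = c := ENNReal.toReal_ofReal hc


lemma lint_exp_prod {a r : ℝ} (ha : 0 < a) (hr : 0 < r) {t : ℝ} (ht : t < r) (ht' : -t < r) :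
    ∫⁻ p : ℝ × ℝ, ENNReal.ofReal (exp (t * (p.1 - p.2)))
        ∂((gammaMeasure a r).prod (gammaMeasure a r))
      = ENNReal.ofReal ((r / (r - t)) ^ a) * ENNReal.ofReal ((r / (r + t)) ^ a) := by
  have H : ∀ p : ℝ × ℝ, ENNReal.ofReal (exp (t * (p.1 - p.2)))
      = ENNReal.ofReal (exp (t * p.1)) * ENNReal.ofReal (exp (-t * p.2)) := by
    intro p
    rw [← ENNReal.ofReal_mul (exp_pos _).le, ← Real.exp_add]
    congr 2; ring
  have : IsProbabilityMeasure (gammaMeasure a r) := isProbabilityMeasure_gammaMeasure ha hr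
  simp_rw [H]
  rw [MeasureTheory.lintegral_prod_mul (f := fun x => ENNReal.ofReal (exp (t * x)))
    (g := fun y => ENNReal.ofReal (exp (-t * y))) (by fun_prop) (by fun_prop),
    gamma_lint_exp ha hr ht, gamma_lint_exp ha hr (show -t < r by linarith), sub_neg_eq_add]

lemma abs_rpow_le_exp {b t z : ℝ} (hb : 1 ≤ b) (ht : 0 < t) :
    |z| ^ b ≤ (b / (t * exp 1)) ^ b * (exp (t * z) + exp (-(t * z))) := by
  have hb0 : 0 < b := by linarith
  have hC : (0:ℝ) ≤ (b / (t * exp 1)) ^ b := by positivity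
  have key : |z| ^ b ≤ (b / (t * exp 1)) ^ b * exp (t * |z|) := by
    rcases eq_or_lt_of_le (abs_nonneg z) with h0 | h0
    · rw [← h0, Real.zero_rpow hb0.ne']; positivity
    · set s := |z| with hs
      have hu : 0 < t * s / b := by positivity
      have h1 : s ^ b = (b / t) ^ b * (t * s / b) ^ b := by
        rw [← Real.mul_rpow (by positivity) (by positivity)]
        congr 1; field_simp
      have h2 : (t * s / b) ^ b ≤ exp (t * s - b) := by
        rw [Real.rpow_def_of_pos hu]
        apply Real.exp_le_exp.mpr
        have hlog : Real.log (t * s / b) ≤ t * s / b - 1 := Real.log_le_sub_one_of_pos hu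
        have := mul_le_mul_of_nonneg_left hlog hb0.le
        calc Real.log (t * s / b) * b = b * Real.log (t * s / b) := by ring
          _ ≤ b * (t * s / b - 1) := this
          _ = t * s - b := by field_simp
      have h3 : (b / (t * exp 1)) ^ b = (b / t) ^ b * exp (-b) := by
        rw [show b / (t * exp 1) = (b / t) * (exp 1)⁻¹ by rw [mul_comm t]; exact div_mul_eq_div_div_swap .. ,
          Real.mul_rpow (by positivity) (by positivity),
          Real.inv_rpow (exp_pos 1).le, Real.exp_one_rpow, ← Real.exp_neg]
      calc s ^ b = (b / t) ^ b * (t * s / b) ^ b := h1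
        _ ≤ (b / t) ^ b * exp (t * s - b) := by
            exact mul_le_mul_of_nonneg_left h2 (by positivity)
        _ = (b / t) ^ b * exp (-b) * exp (t * s) := by
            rw [mul_assoc, ← Real.exp_add]; congr 2; ring
        _ = (b / (t * exp 1)) ^ b * exp (t * s) := by rw [h3]
  refine key.trans (mul_le_mul_of_nonneg_left ?_ hC)
  rcases le_or_gt 0 z with hz | hz
  · rw [abs_of_nonneg hz]
    nlinarith [Real.exp_pos (-(t * z))]
  · rw [abs_of_neg hz, show t * -z = -(t * z) by ring]
    nlinarith [Real.exp_pos (t * z)]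


lemma J_upper {a r b : ℝ} (ha : 1 ≤ a) (hr : 0 < r) (hb : 1 ≤ b) :
    ∫⁻ p : ℝ × ℝ, ENNReal.ofReal (|p.1 - p.2| ^ b) ∂((gammaMeasure a r).prod (gammaMeasure a r))
      ≤ ENNReal.ofReal (8 / 3 * (2 * b / exp 1) ^ b * a ^ (b / 2) / r ^ b) := by
  have ha0 : (0:ℝ) < a := by linarith
  have hb0 : (0:ℝ) < b := by linarith
  have hsa : 1 ≤ Real.sqrt a := by
    rw [show (1:ℝ) = Real.sqrt 1 by simp]
    exact Real.sqrt_le_sqrt ha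
  have hsa0 : 0 < Real.sqrt a := by linarith
  have hsq : Real.sqrt a ^ 2 = a := Real.sq_sqrt ha0.le
  set t := r / (2 * Real.sqrt a) with htdef
  have ht0 : 0 < t := by positivity
  have htr : t < r := by
    rw [htdef, div_lt_iff₀ (by positivity)]
    nlinarith
  have htr' : -t < r := by linarith
  set C := (b / (t * exp 1)) ^ b with hCdef
  have hC0 : (0:ℝ) ≤ C := by positivity
  have step1 : ∫⁻ p : ℝ × ℝ, ENNReal.ofReal (|p.1 - p.2| ^ b)
        ∂((gammaMeasure a r).prod (gammaMeasure a r))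
      ≤ ENNReal.ofReal C *
        ((∫⁻ p : ℝ × ℝ, ENNReal.ofReal (exp (t * (p.1 - p.2)))
            ∂((gammaMeasure a r).prod (gammaMeasure a r))) +
         ∫⁻ p : ℝ × ℝ, ENNReal.ofReal (exp (-t * (p.1 - p.2)))
            ∂((gammaMeasure a r).prod (gammaMeasure a r))) := by
    rw [← lintegral_add_left (by fun_prop) _, ← lintegral_const_mul _ (by fun_prop)]
    apply lintegral_mono
    intro p
    calc ENNReal.ofReal (|p.1 - p.2| ^ b)
        ≤ ENNReal.ofReal (C * (exp (t * (p.1 - p.2)) + exp (-(t * (p.1 - p.2))))) :=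
          ENNReal.ofReal_le_ofReal (abs_rpow_le_exp hb ht0)
      _ = ENNReal.ofReal C * (ENNReal.ofReal (exp (t * (p.1 - p.2)))
            + ENNReal.ofReal (exp (-t * (p.1 - p.2)))) := by
          rw [ENNReal.ofReal_mul hC0, ENNReal.ofReal_add (exp_pos _).le (exp_pos _).le,
            show -(t * (p.1 - p.2)) = -t * (p.1 - p.2) by ring]
  have hrt : 0 < r - t := by linarith
  have hrt' : 0 < r + t := by linarith
  have hL1 := lint_exp_prod ha0 hr htr htr'
  have hL2 := lint_exp_prod ha0 hr (t := -t) htr' (by rwa [neg_neg])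
  rw [sub_neg_eq_add, ← sub_eq_add_neg] at hL2
  have hM : ENNReal.ofReal ((r / (r - t)) ^ a) * ENNReal.ofReal ((r / (r + t)) ^ a)
      ≤ ENNReal.ofReal (4 / 3) := by
    rw [← ENNReal.ofReal_mul (by positivity), ← Real.mul_rpow (by positivity) (by positivity)]
    apply ENNReal.ofReal_le_ofReal
    have hinv : 0 < 1 - 1 / (4 * a) := by
      have : 1 / (4 * a) ≤ 1 / 4 := by
        apply div_le_div_of_nonneg_left <;> linarith
      linarith
    have hdiff : (r - t) * (r + t) = r ^ 2 * (1 - 1 / (4 * a)) := by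
      have ht2 : t ^ 2 = r ^ 2 / (4 * a) := by
        rw [htdef, div_pow, mul_pow, hsq]; norm_num
      have h1 : (r - t) * (r + t) = r ^ 2 - t ^ 2 := by ring
      rw [h1, ht2]; field_simp
    have key : r / (r - t) * (r / (r + t)) = (1 - 1 / (4 * a))⁻¹ := by
      have h1 : (1 - 1 / (4 * a)) ≠ 0 := hinv.ne'
      have hr0 : r ≠ 0 := hr.ne'
      rw [div_mul_div_comm, hdiff]
      field_simp
    have bern : (3 / 4 : ℝ) ≤ (1 - 1 / (4 * a)) ^ a := by
      have hs1 : (-1 : ℝ) ≤ -(1 / (4 * a)) := by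
        have : 1 / (4 * a) ≤ 1 / 4 := by
          apply div_le_div_of_nonneg_left <;> linarith
        linarith
      have h := one_add_mul_self_le_rpow_one_add hs1 ha
      have h34 : 1 + a * -(1 / (4 * a)) = 3 / 4 := by field_simp; ring
      rw [h34] at h
      rw [show 1 + -(1 / (4 * a)) = 1 - 1 / (4 * a) by ring] at h
      exact h
    rw [key, Real.inv_rpow hinv.le]
    calc ((1 - 1 / (4 * a)) ^ a)⁻¹ ≤ ((3:ℝ) / 4)⁻¹ := by
          apply inv_anti₀ (by norm_num) bern
      _ = 4 / 3 := by norm_num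
  calc ∫⁻ p : ℝ × ℝ, ENNReal.ofReal (|p.1 - p.2| ^ b)
        ∂((gammaMeasure a r).prod (gammaMeasure a r))
      ≤ ENNReal.ofReal C *
        ((∫⁻ p : ℝ × ℝ, ENNReal.ofReal (exp (t * (p.1 - p.2)))
            ∂((gammaMeasure a r).prod (gammaMeasure a r))) +
         ∫⁻ p : ℝ × ℝ, ENNReal.ofReal (exp (-t * (p.1 - p.2)))
            ∂((gammaMeasure a r).prod (gammaMeasure a r))) := step1
    _ ≤ ENNReal.ofReal C * (ENNReal.ofReal (4 / 3) + ENNReal.ofReal (4 / 3)) := by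
        rw [hL1, hL2]
        exact mul_le_mul_right (add_le_add hM (by rw [mul_comm]; exact hM)) _
    _ = ENNReal.ofReal (C * (8 / 3)) := by
        rw [← ENNReal.ofReal_add (by norm_num) (by norm_num), ← ENNReal.ofReal_mul hC0]
        norm_num
    _ = ENNReal.ofReal (8 / 3 * (2 * b / exp 1) ^ b * a ^ (b / 2) / r ^ b) := by
        congr 1
        have hbt : b / (t * exp 1) = 2 * b / exp 1 * (Real.sqrt a / r) := by
          rw [htdef]; field_simp
        have hsab : Real.sqrt a ^ b = a ^ (b / 2) := by
          rw [Real.sqrt_eq_rpow, ← Real.rpow_mul ha0.le, show 1 / 2 * b = b / 2 by ring]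
        rw [hCdef, hbt, Real.mul_rpow (by positivity) (by positivity),
          Real.div_rpow (Real.sqrt_nonneg a) hr.le, hsab]
        ring


lemma gamma_ae_nonneg {a r : ℝ} : ∀ᵐ x ∂(gammaMeasure a r), 0 ≤ x := by
  rw [ae_iff]
  have h1 : {x : ℝ | ¬0 ≤ x} = Set.Iio 0 := by ext x; simp
  rw [h1, gammaMeasure, withDensity_apply _ measurableSet_Iio]
  exact lintegral_gammaPDF_of_nonpos le_rfl

lemma gamma_moment_one {a r : ℝ} (ha : 0 < a) (hr : 0 < r) :
    Integrable (fun x => x) (gammaMeasure a r) ∧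
      ∫ x, x ∂(gammaMeasure a r) = a / r :=
  integral_eq_of_lintegral aestronglyMeasurable_id (gamma_ae_nonneg)
    (gamma_lint_id ha hr) (by positivity)

lemma gamma_moment_two {a r : ℝ} (ha : 0 < a) (hr : 0 < r) :
    Integrable (fun x => x ^ 2) (gammaMeasure a r) ∧
      ∫ x, x ^ 2 ∂(gammaMeasure a r) = a * (a + 1) / r ^ 2 :=
  integral_eq_of_lintegral (by fun_prop) (ae_of_all _ fun x => sq_nonneg x)
    (gamma_lint_sq ha hr) (by positivity)

lemma sq_diff_int {a r : ℝ} (ha : 0 < a) (hr : 0 < r) :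
    Integrable (fun p : ℝ × ℝ => (p.1 - p.2) ^ 2)
        ((gammaMeasure a r).prod (gammaMeasure a r)) ∧
      ∫ p : ℝ × ℝ, (p.1 - p.2) ^ 2 ∂((gammaMeasure a r).prod (gammaMeasure a r))
        = 2 * a / r ^ 2 := by
  have hP : IsProbabilityMeasure (gammaMeasure a r) := isProbabilityMeasure_gammaMeasure ha hr
  obtain ⟨hi1, hm1⟩ := gamma_moment_one ha hr
  obtain ⟨hi2, hm2⟩ := gamma_moment_two ha hr
  have hxy : Integrable (fun p : ℝ × ℝ => p.1 * p.2)
      ((gammaMeasure a r).prod (gammaMeasure a r)) := hi1.mul_prod hi1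
  have hx2 : Integrable (fun p : ℝ × ℝ => p.1 ^ 2)
      ((gammaMeasure a r).prod (gammaMeasure a r)) := by
    have := hi2.mul_prod (integrable_const (1:ℝ)) (ν := gammaMeasure a r)
    simpa using this
  have hy2 : Integrable (fun p : ℝ × ℝ => p.2 ^ 2)
      ((gammaMeasure a r).prod (gammaMeasure a r)) := by
    have := (integrable_const (1:ℝ)).mul_prod hi2 (μ := gammaMeasure a r)
    simpa using this
  have hfeq : (fun p : ℝ × ℝ => (p.1 - p.2) ^ 2)
      = fun p : ℝ × ℝ => p.1 ^ 2 + p.2 ^ 2 - 2 * (p.1 * p.2) := by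
    funext p; ring
  constructor
  · rw [hfeq]; exact ((hx2.add hy2).sub (hxy.const_mul 2) : _)
  · have hsum : Integrable (fun p : ℝ × ℝ => p.1 ^ 2 + p.2 ^ 2)
        ((gammaMeasure a r).prod (gammaMeasure a r)) := by exact hx2.add hy2
    rw [hfeq, integral_sub hsum (hxy.const_mul 2), integral_add hx2 hy2,
      MeasureTheory.integral_const_mul]
    have e1 : ∫ p : ℝ × ℝ, p.1 ^ 2 ∂((gammaMeasure a r).prod (gammaMeasure a r))
        = a * (a + 1) / r ^ 2 := by
      have := integral_prod_mul (μ := gammaMeasure a r) (ν := gammaMeasure a r)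
        (f := fun x => x ^ 2) (g := fun _ => (1:ℝ))
      simp only [mul_one, integral_const, measure_univ, ENNReal.toReal_one, one_smul] at this
      rw [this, hm2]; simp
    have e2 : ∫ p : ℝ × ℝ, p.2 ^ 2 ∂((gammaMeasure a r).prod (gammaMeasure a r))
        = a * (a + 1) / r ^ 2 := by
      have := integral_prod_mul (μ := gammaMeasure a r) (ν := gammaMeasure a r)
        (f := fun _ => (1:ℝ)) (g := fun x => x ^ 2)
      simp only [one_mul, integral_const, measure_univ, ENNReal.toReal_one, one_smul] at this
      rw [this, hm2]; simp
    have e3 : ∫ p : ℝ × ℝ, p.1 * p.2 ∂((gammaMeasure a r).prod (gammaMeasure a r))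
        = (a / r) * (a / r) := by
      rw [integral_prod_mul (f := fun x => x) (g := fun x => x), hm1]
    rw [e1, e2, e3]
    field_simp
    ring


noncomputable def Kup (q : ℝ) : ℝ := 8 / 3 * (2 * q / Real.exp 1) ^ q

lemma Kup_pos {q : ℝ} (hq : 1 ≤ q) : 0 < Kup q := by
  have : (0:ℝ) < 2 * q / Real.exp 1 := by positivity
  unfold Kup; positivity


lemma measurable_absdiff_rpow {q : ℝ} (hq : 0 ≤ q) :
    Measurable (fun p : ℝ × ℝ => |p.1 - p.2| ^ q) :=
  (Real.continuous_rpow_const hq).measurable.comp ((measurable_fst.sub measurable_snd).abs)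

lemma I_ub {a r q : ℝ} (ha : 1 ≤ a) (hr : 0 < r) (hq : 1 ≤ q) :
    Integrable (fun p : ℝ × ℝ => |p.1 - p.2| ^ q) ((gammaMeasure a r).prod (gammaMeasure a r)) ∧
      ∫ p : ℝ × ℝ, |p.1 - p.2| ^ q ∂((gammaMeasure a r).prod (gammaMeasure a r))
        ≤ Kup q * a ^ (q / 2) / r ^ q := by
  have hK : 0 < Kup q := Kup_pos hq
  have ha0 : (0:ℝ) < a := by linarith
  refine integral_le_of_lintegral_le (measurable_absdiff_rpow (by linarith)).aestronglyMeasurable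
    (ae_of_all _ fun p => Real.rpow_nonneg (abs_nonneg _) q) ?_ (by positivity)
  have := J_upper ha hr hq
  simpa [Kup] using this

lemma I_bounds {a r b : ℝ} (ha : 1 ≤ a) (hr : 0 < r) (hb : 1 ≤ b) :
    Integrable (fun p : ℝ × ℝ => |p.1 - p.2| ^ b) ((gammaMeasure a r).prod (gammaMeasure a r)) ∧
    (8 / Kup 4) ^ (b / 2) * a ^ (b / 2) / r ^ b
      ≤ ∫ p : ℝ × ℝ, |p.1 - p.2| ^ b ∂((gammaMeasure a r).prod (gammaMeasure a r)) ∧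
    ∫ p : ℝ × ℝ, |p.1 - p.2| ^ b ∂((gammaMeasure a r).prod (gammaMeasure a r))
      ≤ Kup b * a ^ (b / 2) / r ^ b := by
  have ha0 : (0:ℝ) < a := by linarith
  have hb0 : (0:ℝ) < b := by linarith
  have hP : IsProbabilityMeasure (gammaMeasure a r) := isProbabilityMeasure_gammaMeasure ha0 hr
  set μ2 := (gammaMeasure a r).prod (gammaMeasure a r) with hμ2
  set Z : ℝ × ℝ → ℝ := fun p => |p.1 - p.2| with hZ
  have hZ0 : ∀ p, 0 ≤ Z p := fun p => abs_nonneg _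
  obtain ⟨hIb, hub_b⟩ := I_ub ha hr hb
  obtain ⟨hI1, hub_1⟩ := I_ub ha hr (le_refl 1)
  obtain ⟨hI4, hub_4⟩ := I_ub ha hr (show (1:ℝ) ≤ 4 by norm_num)
  obtain ⟨hI2sq, hm2sq⟩ := sq_diff_int ha0 hr
  -- real integrals
  set Ab := ∫ p, Z p ^ b ∂μ2 with hAb
  set A1 := ∫ p, Z p ^ (1:ℝ) ∂μ2 with hA1
  set A4 := ∫ p, Z p ^ (4:ℝ) ∂μ2 with hA4
  have hAb0 : 0 ≤ Ab := integral_nonneg fun p => Real.rpow_nonneg (hZ0 p) _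
  have hA10 : 0 ≤ A1 := integral_nonneg fun p => Real.rpow_nonneg (hZ0 p) _
  have hA40 : 0 ≤ A4 := integral_nonneg fun p => Real.rpow_nonneg (hZ0 p) _
  -- A2 : ∫ Z^2 = 2a/r²
  have hZ2eq : (fun p : ℝ × ℝ => Z p ^ (2:ℝ)) = fun p : ℝ × ℝ => (p.1 - p.2) ^ 2 := by
    funext p
    rw [hZ, show (2:ℝ) = ((2:ℕ):ℝ) by norm_num, Real.rpow_natCast, sq_abs]
  have hI2 : Integrable (fun p : ℝ × ℝ => Z p ^ (2:ℝ)) μ2 := by rw [hZ2eq]; exact hI2sq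
  have hA2 : ∫ p, Z p ^ (2:ℝ) ∂μ2 = 2 * a / r ^ 2 := by rw [hZ2eq]; exact hm2sq
  -- Hölder 1 : A2 ≤ A1^(2/3) * A4^(1/3)
  have hol1 : 2 * a / r ^ 2 ≤ A1 ^ (2/3 : ℝ) * A4 ^ (1/3 : ℝ) := by
    have conj : (3/2 : ℝ).HolderConjugate 3 := Real.holderConjugate_iff.mpr ⟨by norm_num, by norm_num⟩
    have H := ENNReal.lintegral_mul_le_Lp_mul_Lq μ2 conj
      (f := fun p => ENNReal.ofReal (Z p ^ (2/3 : ℝ)))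
      (g := fun p => ENNReal.ofReal (Z p ^ (4/3 : ℝ)))
      (by exact ((measurable_absdiff_rpow (by norm_num)).ennreal_ofReal).aemeasurable)
      (by exact ((measurable_absdiff_rpow (by norm_num)).ennreal_ofReal).aemeasurable)
    have e0 : ∀ p : ℝ × ℝ, ENNReal.ofReal (Z p ^ (2/3:ℝ)) * ENNReal.ofReal (Z p ^ (4/3:ℝ))
        = ENNReal.ofReal (Z p ^ (2:ℝ)) := by
      intro p
      rw [← ENNReal.ofReal_mul (Real.rpow_nonneg (hZ0 p) _),
        ← Real.rpow_add' (hZ0 p) (by norm_num)]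
      norm_num
    have e1 : ∀ p : ℝ × ℝ, ENNReal.ofReal (Z p ^ (2/3:ℝ)) ^ (3/2:ℝ)
        = ENNReal.ofReal (Z p ^ (1:ℝ)) := by
      intro p
      rw [ENNReal.ofReal_rpow_of_nonneg (Real.rpow_nonneg (hZ0 p) _) (by norm_num),
        ← Real.rpow_mul (hZ0 p)]
      norm_num
    have e2 : ∀ p : ℝ × ℝ, ENNReal.ofReal (Z p ^ (4/3:ℝ)) ^ (3:ℝ)
        = ENNReal.ofReal (Z p ^ (4:ℝ)) := by
      intro p
      rw [ENNReal.ofReal_rpow_of_nonneg (Real.rpow_nonneg (hZ0 p) _) (by norm_num),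
        ← Real.rpow_mul (hZ0 p)]
      norm_num
    simp only [Pi.mul_apply] at H
    simp_rw [e0, e1, e2] at H
    rw [← ofReal_integral_eq_lintegral_ofReal hI2
        (ae_of_all _ fun p => Real.rpow_nonneg (hZ0 p) _),
      ← ofReal_integral_eq_lintegral_ofReal hI1
        (ae_of_all _ fun p => Real.rpow_nonneg (hZ0 p) _),
      ← ofReal_integral_eq_lintegral_ofReal hI4
        (ae_of_all _ fun p => Real.rpow_nonneg (hZ0 p) _)] at H
    rw [ENNReal.ofReal_rpow_of_nonneg hA10 (by norm_num),
      ENNReal.ofReal_rpow_of_nonneg hA40 (by norm_num),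
      ← ENNReal.ofReal_mul (Real.rpow_nonneg hA10 _), hA2] at H
    have H' : 2 * a / r ^ 2 ≤ A1 ^ (1 / (3/2) : ℝ) * A4 ^ (1/3 : ℝ) :=
      (ENNReal.ofReal_le_ofReal_iff
        (mul_nonneg (Real.rpow_nonneg hA10 _) (Real.rpow_nonneg hA40 _))).mp H
    rw [show (1 / (3/2) : ℝ) = 2/3 by norm_num] at H'
    exact H'
  -- Hölder 2 : A1 ≤ Ab^(1/b)
  have hol2 : A1 ≤ Ab ^ ((1:ℝ)/b) := by
    rcases eq_or_lt_of_le hb with rfl | hb1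
    · simp [hAb, hA1]
    · have hbne : b ≠ 0 := by linarith
      have hbne1 : b - 1 ≠ 0 := sub_ne_zero.mpr hb1.ne'
      have hconj : b⁻¹ + (b/(b-1))⁻¹ = 1 := by field_simp; ring
      have conj2 : b.HolderConjugate (b/(b-1)) := Real.holderConjugate_iff.mpr ⟨hb1, hconj⟩
      have H := ENNReal.lintegral_mul_le_Lp_mul_Lq μ2 conj2
        (f := fun p => ENNReal.ofReal (Z p)) (g := fun _ => (1:ℝ≥0∞))
        (((measurable_fst.sub measurable_snd).abs).ennreal_ofReal).aemeasurable
        aemeasurable_const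
      simp only [Pi.mul_apply, mul_one, ENNReal.one_rpow, lintegral_one, measure_univ,
        mul_one] at H
      have e3 : ∀ p : ℝ × ℝ, ENNReal.ofReal (Z p) ^ b = ENNReal.ofReal (Z p ^ b) :=
        fun p => ENNReal.ofReal_rpow_of_nonneg (hZ0 p) hb0.le
      have e4 : ∀ p : ℝ × ℝ, ENNReal.ofReal (Z p) = ENNReal.ofReal (Z p ^ (1:ℝ)) := by
        intro p; rw [Real.rpow_one]
      simp_rw [e3] at H
      rw [show (fun p : ℝ × ℝ => ENNReal.ofReal (Z p)) = fun p => ENNReal.ofReal (Z p ^ (1:ℝ))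
        from funext e4] at H
      rw [← ofReal_integral_eq_lintegral_ofReal hI1
          (ae_of_all _ fun p => Real.rpow_nonneg (hZ0 p) _),
        ← ofReal_integral_eq_lintegral_ofReal hIb
          (ae_of_all _ fun p => Real.rpow_nonneg (hZ0 p) _),
        ENNReal.ofReal_rpow_of_nonneg hAb0 (by positivity)] at H
      exact (ENNReal.ofReal_le_ofReal_iff (Real.rpow_nonneg hAb0 _)).mp H
  -- final arithmetic
  refine ⟨hIb, ?_, hub_b⟩
  have hK4 : (0:ℝ) < Kup 4 := Kup_pos (by norm_num)
  set y : ℝ := 2 * a / r ^ 2 with hy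
  set D : ℝ := Kup 4 * a ^ ((4:ℝ) / 2) / r ^ (4:ℝ) with hDdef
  have hD0 : (0:ℝ) < D := by
    have h1 : (0:ℝ) < a ^ ((4:ℝ)/2) := Real.rpow_pos_of_pos ha0 _
    have h2 : (0:ℝ) < r ^ (4:ℝ) := Real.rpow_pos_of_pos hr _
    rw [hDdef]; positivity
  have hy0 : (0:ℝ) < y := by rw [hy]; positivity
  set w : ℝ := 8 * a / (Kup 4 * r ^ 2) with hw
  have hw0 : (0:ℝ) < w := by rw [hw]; positivity
  have hDr0 : (0:ℝ) < D ^ ((1:ℝ)/3) := Real.rpow_pos_of_pos hD0 _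
  have s1 : y ≤ A1 ^ (2/3:ℝ) * D ^ (1/3:ℝ) := by
    refine hol1.trans (mul_le_mul_of_nonneg_left ?_ (Real.rpow_nonneg hA10 _))
    exact Real.rpow_le_rpow hA40 hub_4 (by norm_num)
  have s2 : y / D ^ (1/3:ℝ) ≤ A1 ^ (2/3:ℝ) := (div_le_iff₀ hDr0).mpr s1
  have hyD : y / D ^ (1/3:ℝ) = w ^ (1/3:ℝ) := by
    have hDval : D = Kup 4 * a ^ 2 / r ^ 4 := by
      rw [hDdef, show ((4:ℝ)/2) = ((2:ℕ):ℝ) by norm_num, Real.rpow_natCast,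
        show (4:ℝ) = ((4:ℕ):ℝ) by norm_num, Real.rpow_natCast]
    have hy3 : y ^ (3:ℕ) / D = w := by
      rw [hy, hDval, hw]
      field_simp
      ring
    have h5 : w ^ (1/3:ℝ) = (y ^ (3:ℕ)) ^ (1/3:ℝ) / D ^ (1/3:ℝ) := by
      rw [← hy3, Real.div_rpow (by positivity) hD0.le]
    rw [h5]
    congr 1
    rw [← Real.rpow_natCast y 3, ← Real.rpow_mul hy0.le]
    norm_num
  have s2' : w ^ (1/3:ℝ) ≤ A1 ^ (2/3:ℝ) := hyD ▸ s2
  have s3 : w ^ ((1:ℝ)/2) ≤ A1 := by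
    have h := Real.rpow_le_rpow (Real.rpow_nonneg hw0.le _) s2'
      (by norm_num : (0:ℝ) ≤ 3/2)
    rwa [← Real.rpow_mul hw0.le, ← Real.rpow_mul hA10,
      show (1/3:ℝ) * (3/2) = 1/2 by norm_num, show (2/3:ℝ) * (3/2) = 1 by norm_num,
      Real.rpow_one] at h
  have s4 : A1 ^ b ≤ Ab := by
    have h := Real.rpow_le_rpow hA10 hol2 hb0.le
    rwa [← Real.rpow_mul hAb0, show (1:ℝ)/b * b = 1 by field_simp, Real.rpow_one] at h
  have s5 : (w ^ ((1:ℝ)/2)) ^ b ≤ Ab :=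
    le_trans (Real.rpow_le_rpow (Real.rpow_nonneg hw0.le _) s3 hb0.le) s4
  have hclosed : (w ^ ((1:ℝ)/2)) ^ b = (8 / Kup 4) ^ (b/2) * a ^ (b/2) / r ^ b := by
    rw [← Real.rpow_mul hw0.le, show (1:ℝ)/2 * b = b/2 by ring]
    have hwsplit : w = (8 / Kup 4) * (a / r ^ 2) := by
      rw [hw]; field_simp
    rw [hwsplit, Real.mul_rpow (by positivity) (by positivity),
      Real.div_rpow ha0.le (by positivity),
      ← Real.rpow_natCast r 2, ← Real.rpow_mul hr.le]
    rw [show ((2:ℕ):ℝ) * (b/2) = b by push_cast; ring]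
    ring
  rw [← hclosed]
  exact s5


end Stmt19Aux

open Stmt19Aux in
theorem stmt19 (b : ℝ) (hb : 1 ≤ b) :
    ∃ c C : ℝ, 0 < c ∧ c ≤ C ∧
      ∀ (n : ℕ), 1 ≤ n →
        c * (n : ℝ) ^ (1 - b / 2) ≤
          (∑ k ∈ Finset.Icc 1 n,
            ∫ p : ℝ × ℝ, |p.1 - p.2| ^ b
              ∂((gammaMeasure k (n : ℝ)).prod (gammaMeasure k (n : ℝ)))) ∧
        (∑ k ∈ Finset.Icc 1 n,
            ∫ p : ℝ × ℝ, |p.1 - p.2| ^ b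
              ∂((gammaMeasure k (n : ℝ)).prod (gammaMeasure k (n : ℝ)))) ≤
          C * (n : ℝ) ^ (1 - b / 2) := by
  have hK4 : 0 < Kup 4 := Kup_pos (by norm_num)
  have hKb : 0 < Kup b := Kup_pos hb
  set cL : ℝ := (8 / Kup 4) ^ (b / 2) with hcL
  have hcL0 : 0 < cL := Real.rpow_pos_of_pos (by positivity) _
  have h2p : (0:ℝ) < 2 ^ (1 + b / 2 : ℝ) := Real.rpow_pos_of_pos (by norm_num) _
  set c : ℝ := cL / 2 ^ (1 + b / 2 : ℝ) with hc
  have hc0 : 0 < c := by positivity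
  refine ⟨c, max (Kup b) c, hc0, le_max_right _ _, ?_⟩
  intro n hn
  have hn0 : (0:ℝ) < (n : ℝ) := by exact_mod_cast hn
  have hnb : (0:ℝ) < (n:ℝ) ^ b := Real.rpow_pos_of_pos hn0 _
  constructor
  · -- lower bound
    have hsub : Finset.Icc (n / 2 + 1) n ⊆ Finset.Icc 1 n := by
      intro k hk
      rw [Finset.mem_Icc] at hk ⊢
      omega
    have hmono : ∑ k ∈ Finset.Icc (n / 2 + 1) n,
        (∫ p : ℝ × ℝ, |p.1 - p.2| ^ b
          ∂((gammaMeasure k (n : ℝ)).prod (gammaMeasure k (n : ℝ))))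
        ≤ ∑ k ∈ Finset.Icc 1 n,
        (∫ p : ℝ × ℝ, |p.1 - p.2| ^ b
          ∂((gammaMeasure k (n : ℝ)).prod (gammaMeasure k (n : ℝ)))) := by
      refine Finset.sum_le_sum_of_subset_of_nonneg hsub ?_
      intro k _ _
      exact integral_nonneg fun p => Real.rpow_nonneg (abs_nonneg _) _
    have hcard : (Finset.Icc (n / 2 + 1) n).card = n - n / 2 := by
      rw [Nat.card_Icc]; omega
    have heach : ∀ k ∈ Finset.Icc (n / 2 + 1) n,
        cL * ((n:ℝ) / 2) ^ (b / 2) / (n:ℝ) ^ b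
          ≤ ∫ p : ℝ × ℝ, |p.1 - p.2| ^ b
            ∂((gammaMeasure k (n : ℝ)).prod (gammaMeasure k (n : ℝ))) := by
      intro k hk
      rw [Finset.mem_Icc] at hk
      have hk1 : 1 ≤ k := by omega
      have hka : (1:ℝ) ≤ (k:ℝ) := by exact_mod_cast hk1
      have hbnd := (I_bounds hka hn0 hb).2.1
      refine le_trans ?_ hbnd
      have hknR : (n:ℝ) / 2 ≤ (k:ℝ) := by
        have h2k : n ≤ 2 * k := by omega
        have : (n:ℝ) ≤ 2 * (k:ℝ) := by exact_mod_cast h2k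
        linarith
      have : ((n:ℝ) / 2) ^ (b / 2) ≤ (k:ℝ) ^ (b / 2) :=
        Real.rpow_le_rpow (by positivity) hknR (by positivity)
      gcongr
    have hsum1 : (n - n / 2 : ℕ) • (cL * ((n:ℝ) / 2) ^ (b / 2) / (n:ℝ) ^ b)
        ≤ ∑ k ∈ Finset.Icc (n / 2 + 1) n,
          (∫ p : ℝ × ℝ, |p.1 - p.2| ^ b
            ∂((gammaMeasure k (n : ℝ)).prod (gammaMeasure k (n : ℝ)))) := by
      rw [← hcard]
      exact Finset.card_nsmul_le_sum _ _ _ heach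
    have hX0 : 0 ≤ cL * ((n:ℝ) / 2) ^ (b / 2) / (n:ℝ) ^ b := by positivity
    have hcast : (n:ℝ) / 2 ≤ ((n - n / 2 : ℕ) : ℝ) := by
      have h2 : n ≤ 2 * (n - n / 2) := by omega
      have : (n:ℝ) ≤ 2 * ((n - n / 2 : ℕ) : ℝ) := by exact_mod_cast h2
      linarith
    have hEq : ((n:ℝ) / 2) * (cL * ((n:ℝ) / 2) ^ (b / 2) / (n:ℝ) ^ b)
        = c * (n:ℝ) ^ (1 - b / 2) := by
      have e1 : ((n:ℝ) / 2) * ((n:ℝ) / 2) ^ (b / 2) = ((n:ℝ) / 2) ^ (1 + b / 2 : ℝ) := by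
        rw [Real.rpow_add (by positivity), Real.rpow_one]
      have e2 : ((n:ℝ) / 2) ^ (1 + b / 2 : ℝ) = (n:ℝ) ^ (1 + b / 2 : ℝ) / 2 ^ (1 + b / 2 : ℝ) :=
        Real.div_rpow hn0.le (by norm_num : (0:ℝ) ≤ 2) _
      have e3 : (n:ℝ) ^ (1 + b / 2 : ℝ) = (n:ℝ) ^ (1 - b / 2) * (n:ℝ) ^ b := by
        rw [← Real.rpow_add hn0]; congr 1; ring
      calc ((n:ℝ) / 2) * (cL * ((n:ℝ) / 2) ^ (b / 2) / (n:ℝ) ^ b)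
          = cL * (((n:ℝ) / 2) * ((n:ℝ) / 2) ^ (b / 2)) / (n:ℝ) ^ b := by ring
        _ = cL * ((n:ℝ) ^ (1 - b / 2) * (n:ℝ) ^ b / 2 ^ (1 + b / 2 : ℝ)) / (n:ℝ) ^ b := by
            rw [e1, e2, e3]
        _ = c * (n:ℝ) ^ (1 - b / 2) := by rw [hc]; field_simp
    calc c * (n:ℝ) ^ (1 - b / 2)
        = ((n:ℝ) / 2) * (cL * ((n:ℝ) / 2) ^ (b / 2) / (n:ℝ) ^ b) := hEq.symm
      _ ≤ ((n - n / 2 : ℕ) : ℝ) * (cL * ((n:ℝ) / 2) ^ (b / 2) / (n:ℝ) ^ b) :=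
          mul_le_mul_of_nonneg_right hcast hX0
      _ = (n - n / 2 : ℕ) • (cL * ((n:ℝ) / 2) ^ (b / 2) / (n:ℝ) ^ b) :=
          (nsmul_eq_mul _ _).symm
      _ ≤ ∑ k ∈ Finset.Icc (n / 2 + 1) n,
          (∫ p : ℝ × ℝ, |p.1 - p.2| ^ b
            ∂((gammaMeasure k (n : ℝ)).prod (gammaMeasure k (n : ℝ)))) := hsum1
      _ ≤ _ := hmono
  · -- upper bound
    have heachU : ∀ k ∈ Finset.Icc 1 n,
        (∫ p : ℝ × ℝ, |p.1 - p.2| ^ b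
          ∂((gammaMeasure k (n : ℝ)).prod (gammaMeasure k (n : ℝ))))
          ≤ Kup b * (n:ℝ) ^ (b / 2) / (n:ℝ) ^ b := by
      intro k hk
      rw [Finset.mem_Icc] at hk
      have hka : (1:ℝ) ≤ (k:ℝ) := by exact_mod_cast hk.1
      have hkn : (k:ℝ) ≤ (n:ℝ) := by exact_mod_cast hk.2
      refine le_trans ((I_bounds hka hn0 hb).2.2) ?_
      gcongr
    have hsumU := Finset.sum_le_card_nsmul _ _ _ heachU
    have hcardU : (Finset.Icc 1 n).card = n := by rw [Nat.card_Icc]; omega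
    rw [hcardU, nsmul_eq_mul] at hsumU
    have hEqU : (n:ℝ) * (Kup b * (n:ℝ) ^ (b / 2) / (n:ℝ) ^ b)
        = Kup b * (n:ℝ) ^ (1 - b / 2) := by
      have e1 : (n:ℝ) * (n:ℝ) ^ (b / 2) = (n:ℝ) ^ (1 + b / 2 : ℝ) := by
        rw [Real.rpow_add hn0, Real.rpow_one]
      have e3 : (n:ℝ) ^ (1 + b / 2 : ℝ) = (n:ℝ) ^ (1 - b / 2) * (n:ℝ) ^ b := by
        rw [← Real.rpow_add hn0]; congr 1; ring
      calc (n:ℝ) * (Kup b * (n:ℝ) ^ (b / 2) / (n:ℝ) ^ b)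
          = Kup b * ((n:ℝ) * (n:ℝ) ^ (b / 2)) / (n:ℝ) ^ b := by ring
        _ = Kup b * ((n:ℝ) ^ (1 - b / 2) * (n:ℝ) ^ b) / (n:ℝ) ^ b := by rw [e1, e3]
        _ = Kup b * (n:ℝ) ^ (1 - b / 2) := by field_simp
    calc (∑ k ∈ Finset.Icc 1 n,
          ∫ p : ℝ × ℝ, |p.1 - p.2| ^ b
            ∂((gammaMeasure k (n : ℝ)).prod (gammaMeasure k (n : ℝ))))
        ≤ (n:ℝ) * (Kup b * (n:ℝ) ^ (b / 2) / (n:ℝ) ^ b) := hsumU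
      _ = Kup b * (n:ℝ) ^ (1 - b / 2) := hEqU
      _ ≤ max (Kup b) c * (n:ℝ) ^ (1 - b / 2) :=
          mul_le_mul_of_nonneg_right (le_max_left _ _) (Real.rpow_nonneg hn0.le _)
end
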